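/- arXiv:2203.17107 — 2 statements merged into one kernel-verified Lean document; each statement's English description precedes it below -/
import Mathlib

section
/- Let R = (R_t)_{t=0}^T be an adapted real-valued process with each R_t integrable, and let S be its Snell envelope: S_{T+1} := 0 and S_t := max{ R_t , E[S_{t+1} | F_t] } for t = T,…,0. Consider the relaxed optimal stopping problem (ROS): maximize E[Σ_{t=0}^T R_t x_t] over adapted processes x = (x_t)_{t=0}^T with x_t ≥ 0 and Σ_{t=0}^T x_t ≤ 1 a.s. Then: (i) the optimum value of (ROS) equals E[S₀]; (ii) a feasible adapted x is optimal for (ROS) if and only if for every t = 0,…,T, x_t(ω) maximizes ξ ↦ (R_t(ω) − E[S_{t+1}|F_t](ω))·ξ over ξ ∈ [0, 1 − Σ_{s=0}^{t−1} x_s(ω)] for a.e. ω; and (iii) there exists a stopping time τ : Ω → {0,…,T+1} (with {τ ≤ t} ∈ F_t for all t) such that E[R_τ] = E[S₀], where R_{T+1} := 0; in particular sup_{τ} E[R_τ] = E[S₀]. -/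
open MeasureTheory

noncomputable section

/-- A feasible relaxed stopping strategy: adapted, nonnegative, with total mass at most
one. -/
def FeasibleROS {Ω : Type*} {mΩ : MeasurableSpace Ω} (μ : Measure Ω) (T : ℕ)
    (𝓕 : ℕ → MeasurableSpace Ω) (x : ℕ → Ω → ℝ) : Prop :=
  (∀ t ≤ T, Measurable[𝓕 t] (x t)) ∧
  ∀ᵐ ω ∂μ, (∀ t ≤ T, 0 ≤ x t ω) ∧ ∑ t ∈ Finset.range (T + 1), x t ω ≤ 1

namespace St18

variable {Ω : Type*} {mΩ : MeasurableSpace Ω} {μ : Measure Ω} [IsProbabilityMeasure μ]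
  {T : ℕ} {𝓕 : ℕ → MeasurableSpace Ω}

/-- Pure real inequality equivalence for the scenariowise optimality. -/
lemma realEquiv {a g s xt yt : ℝ} (hs : s = max a g) (hx0 : 0 ≤ xt) (hy' : xt ≤ yt) :
    ((s - a) * xt = 0 ∧ (s - g) * (yt - xt) = 0) ↔
      ∀ ξ : ℝ, 0 ≤ ξ → ξ ≤ yt → (a - g) * ξ ≤ (a - g) * xt := by
  subst hs
  rcases le_total a g with hag | hag
  · rw [max_eq_right hag]
    constructor
    · rintro ⟨h1, _⟩ ξ hξ0 hξy
      rcases eq_or_lt_of_le hag with h | h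
      · simp [h]
      · have hxt : xt = 0 := by
          rcases mul_eq_zero.1 h1 with h' | h'
          · nlinarith
          · exact h'
        nlinarith
    · intro h
      constructor
      · have := h 0 le_rfl (hx0.trans hy')
        nlinarith
      · ring_nf
  · rw [max_eq_left hag]
    constructor
    · rintro ⟨_, h2⟩ ξ hξ0 hξy
      rcases eq_or_lt_of_le hag with h | h
      · simp [h]
      · have hyx : yt = xt := by nlinarith [mul_eq_zero.1 h2]
        nlinarith
    · intro h
      refine ⟨by ring, ?_⟩
      have := h yt (hx0.trans hy') le_rfl
      nlinarith


lemma S_int (hle : ∀ t, 𝓕 t ≤ mΩ) {R S : ℕ → Ω → ℝ}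
    (hR_int : ∀ t ≤ T, Integrable (R t) μ) (hS_top : S (T + 1) = 0)
    (hSnell : ∀ t ≤ T, S t =ᵐ[μ] fun ω => max (R t ω) ((μ[S (t + 1)|𝓕 t]) ω)) :
    ∀ t ≤ T + 1, Integrable (S t) μ := by
  have key : ∀ k t, t + k = T + 1 → Integrable (S t) μ := by
    intro k
    induction k with
    | zero => intro t ht; simp only [Nat.add_zero] at ht; rw [ht, hS_top]; exact integrable_zero _ _ _
    | succ k ih =>
      intro t ht
      have htT : t ≤ T := by omega
      have h2 : Integrable (fun ω => max (R t ω) ((μ[S (t + 1)|𝓕 t]) ω)) μ := by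
        have := (hR_int t htT).sup (integrable_condExp (f := S (t+1)) (m := 𝓕 t))
        have he : (fun ω => max (R t ω) ((μ[S (t + 1)|𝓕 t]) ω)) = R t ⊔ μ[S (t + 1)|𝓕 t] := by
          funext ω; simp [Pi.sup_apply, max_def, max_comm]
        rw [he]; exact this
      exact h2.congr (hSnell t htT).symm
  intro t ht
  exact key (T + 1 - t) t (by omega)

lemma tower' {m : MeasurableSpace Ω} (hm : m ≤ mΩ) {f g : Ω → ℝ}
    (hfm : StronglyMeasurable[m] f) (hg : Integrable g μ)
    (hfg : Integrable (fun ω => f ω * g ω) μ) :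
    ∫ ω, f ω * (μ[g|m]) ω ∂μ = ∫ ω, f ω * g ω ∂μ := by
  have h := condExp_mul_of_stronglyMeasurable_left (μ := μ) hfm (by simpa [Pi.mul_def] using hfg) hg
  have h2 : ∫ ω, f ω * (μ[g|m]) ω ∂μ = ∫ ω, (μ[fun ω => f ω * g ω|m]) ω ∂μ := by
    refine integral_congr_ae ?_
    filter_upwards [h] with ω hω
    exact hω.symm
  rw [h2, integral_condExp hm]


lemma mulbdd {f g : Ω → ℝ} (hf : Integrable f μ) (hg : AEStronglyMeasurable g μ)
    (hb : ∀ᵐ ω ∂μ, ‖g ω‖ ≤ 1) : Integrable (fun ω => f ω * g ω) μ := by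
  have := Integrable.bdd_mul (f := g) (g := f) (c := 1) hf hg hb
  exact this.congr (Filter.Eventually.of_forall fun ω => mul_comm _ _)

lemma feas_bounds {x : ℕ → Ω → ℝ} (hx : FeasibleROS μ T 𝓕 x) :
    ∀ᵐ ω ∂μ, (∀ t ≤ T, 0 ≤ x t ω ∧ x t ω ≤ 1) ∧
      ∀ t ≤ T + 1, 0 ≤ ∑ s ∈ Finset.range t, x s ω ∧ ∑ s ∈ Finset.range t, x s ω ≤ 1 := by
  filter_upwards [hx.2] with ω h
  obtain ⟨h0, h1⟩ := h
  have hA : ∀ t ≤ T + 1, 0 ≤ ∑ s ∈ Finset.range t, x s ω ∧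
      ∑ s ∈ Finset.range t, x s ω ≤ 1 := by
    intro t ht
    have hnn : 0 ≤ ∑ s ∈ Finset.range t, x s ω :=
      Finset.sum_nonneg fun s hs => h0 s (by simp at hs; omega)
    refine ⟨hnn, le_trans ?_ h1⟩
    refine Finset.sum_le_sum_of_subset_of_nonneg ?_ fun s hs _ => h0 s (by simp at hs; omega)
    exact Finset.range_subset_range.2 (by omega)
  refine ⟨fun t ht => ⟨h0 t ht, ?_⟩, hA⟩
  have h1' := (hA (t + 1) (by omega)).2
  have h2' := (hA t (by omega)).1
  rw [Finset.sum_range_succ] at h1'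
  linarith

lemma step (hle : ∀ t, 𝓕 t ≤ mΩ) (hmono : ∀ s t, s ≤ t → 𝓕 s ≤ 𝓕 t)
    {R S : ℕ → Ω → ℝ}
    (hR_int : ∀ t ≤ T, Integrable (R t) μ) (hS_top : S (T + 1) = 0)
    (hSnell : ∀ t ≤ T, S t =ᵐ[μ] fun ω => max (R t ω) ((μ[S (t + 1)|𝓕 t]) ω))
    {x : ℕ → Ω → ℝ} (hx : FeasibleROS μ T 𝓕 x) {t : ℕ} (ht : t ≤ T) :
    ∫ ω, S t ω * (1 - ∑ s ∈ Finset.range t, x s ω) ∂μ =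
      (∫ ω, R t ω * x t ω ∂μ)
      + ((∫ ω, (S t ω - R t ω) * x t ω ∂μ)
        + ∫ ω, (S t ω - (μ[S (t + 1)|𝓕 t]) ω) * (1 - ∑ s ∈ Finset.range (t + 1), x s ω) ∂μ)
      + ∫ ω, S (t + 1) ω * (1 - ∑ s ∈ Finset.range (t + 1), x s ω) ∂μ := by
  have hSint := S_int hle hR_int hS_top hSnell
  have hSt : Integrable (S t) μ := hSint t (by omega)
  have hSt1 : Integrable (S (t + 1)) μ := hSint (t + 1) (by omega)
  have hGint : Integrable (μ[S (t + 1)|𝓕 t]) μ := integrable_condExp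
  -- measurability
  have hxm : AEStronglyMeasurable (x t) μ :=
    ((hx.1 t ht).mono (hle t) le_rfl).aestronglyMeasurable
  have hy'meas : Measurable[𝓕 t] (fun ω => 1 - ∑ s ∈ Finset.range (t + 1), x s ω) :=
    (measurable_const (a := (1:ℝ))).sub
      (Finset.measurable_sum _ fun s hs =>
        ((hx.1 s (by simp at hs; omega)).mono (hmono s t (by simp at hs; omega)) le_rfl))
  have hy'm : AEStronglyMeasurable (fun ω => 1 - ∑ s ∈ Finset.range (t + 1), x s ω) μ :=
    ((hy'meas.mono (hle t) le_rfl)).aestronglyMeasurable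
  -- a.e. bounds
  have hbx : ∀ᵐ ω ∂μ, ‖x t ω‖ ≤ 1 := by
    filter_upwards [feas_bounds hx] with ω h
    have := h.1 t ht
    rw [Real.norm_eq_abs, abs_le]; constructor <;> linarith [this.1, this.2]
  have hby' : ∀ᵐ ω ∂μ, ‖1 - ∑ s ∈ Finset.range (t + 1), x s ω‖ ≤ 1 := by
    filter_upwards [feas_bounds hx] with ω h
    have := h.2 (t + 1) (by omega)
    rw [Real.norm_eq_abs, abs_le]
    constructor <;> linarith [this.1, this.2]
  -- integrabilities
  have I1 : Integrable (fun ω => R t ω * x t ω) μ := mulbdd (hR_int t ht) hxm hbx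
  have I2 : Integrable (fun ω => (S t ω - R t ω) * x t ω) μ := by
    exact mulbdd (hSt.sub (hR_int t ht)) hxm hbx
  have I3 : Integrable (fun ω =>
      (S t ω - (μ[S (t + 1)|𝓕 t]) ω) * (1 - ∑ s ∈ Finset.range (t + 1), x s ω)) μ := by
    exact mulbdd (hSt.sub hGint) hy'm hby'
  have I4 : Integrable (fun ω =>
      (1 - ∑ s ∈ Finset.range (t + 1), x s ω) * (μ[S (t + 1)|𝓕 t]) ω) μ := by
    have := mulbdd hGint hy'm hby'
    exact this.congr (Filter.Eventually.of_forall fun ω => mul_comm _ _)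
  have I5 : Integrable (fun ω =>
      (1 - ∑ s ∈ Finset.range (t + 1), x s ω) * S (t + 1) ω) μ := by
    exact Integrable.bdd_mul (c := 1) hSt1 hy'm hby'
  -- pointwise identity
  have hpt : ∫ ω, S t ω * (1 - ∑ s ∈ Finset.range t, x s ω) ∂μ =
      ∫ ω, ((R t ω * x t ω + ((S t ω - R t ω) * x t ω
        + (S t ω - (μ[S (t + 1)|𝓕 t]) ω) * (1 - ∑ s ∈ Finset.range (t + 1), x s ω)))
        + (1 - ∑ s ∈ Finset.range (t + 1), x s ω) * (μ[S (t + 1)|𝓕 t]) ω) ∂μ := by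
    refine integral_congr_ae (Filter.Eventually.of_forall fun ω => ?_)
    simp only [Finset.sum_range_succ]
    ring
  have I23 : Integrable (fun ω => (S t ω - R t ω) * x t ω
      + (S t ω - (μ[S (t + 1)|𝓕 t]) ω) * (1 - ∑ s ∈ Finset.range (t + 1), x s ω)) μ := by
    exact I2.add I3
  have I123 : Integrable (fun ω => R t ω * x t ω + ((S t ω - R t ω) * x t ω
      + (S t ω - (μ[S (t + 1)|𝓕 t]) ω) * (1 - ∑ s ∈ Finset.range (t + 1), x s ω))) μ := by
    exact I1.add I23
  rw [hpt, integral_add I123 I4, integral_add I1 I23, integral_add I2 I3]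
  have htow : ∫ ω, (1 - ∑ s ∈ Finset.range (t + 1), x s ω) * (μ[S (t + 1)|𝓕 t]) ω ∂μ
      = ∫ ω, (1 - ∑ s ∈ Finset.range (t + 1), x s ω) * S (t + 1) ω ∂μ :=
    tower' (hle t) hy'meas.stronglyMeasurable hSt1 I5
  rw [htow]
  have h5 : ∫ ω, (1 - ∑ s ∈ Finset.range (t + 1), x s ω) * S (t + 1) ω ∂μ
      = ∫ ω, S (t + 1) ω * (1 - ∑ s ∈ Finset.range (t + 1), x s ω) ∂μ :=
    integral_congr_ae (Filter.Eventually.of_forall fun ω => mul_comm _ _)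
  rw [h5]


lemma telescope (hle : ∀ t, 𝓕 t ≤ mΩ) (hmono : ∀ s t, s ≤ t → 𝓕 s ≤ 𝓕 t)
    {R S : ℕ → Ω → ℝ}
    (hR_int : ∀ t ≤ T, Integrable (R t) μ) (hS_top : S (T + 1) = 0)
    (hSnell : ∀ t ≤ T, S t =ᵐ[μ] fun ω => max (R t ω) ((μ[S (t + 1)|𝓕 t]) ω))
    {x : ℕ → Ω → ℝ} (hx : FeasibleROS μ T 𝓕 x) :
    ∫ ω, S 0 ω ∂μ =
      (∑ t ∈ Finset.range (T + 1), ∫ ω, R t ω * x t ω ∂μ)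
      + ∑ t ∈ Finset.range (T + 1), ((∫ ω, (S t ω - R t ω) * x t ω ∂μ)
        + ∫ ω, (S t ω - (μ[S (t + 1)|𝓕 t]) ω) * (1 - ∑ s ∈ Finset.range (t + 1), x s ω) ∂μ) := by
  have key : ∀ n ≤ T + 1, ∫ ω, S 0 ω ∂μ =
      (∑ t ∈ Finset.range n, ∫ ω, R t ω * x t ω ∂μ)
      + (∑ t ∈ Finset.range n, ((∫ ω, (S t ω - R t ω) * x t ω ∂μ)
        + ∫ ω, (S t ω - (μ[S (t + 1)|𝓕 t]) ω) * (1 - ∑ s ∈ Finset.range (t + 1), x s ω) ∂μ))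
      + ∫ ω, S n ω * (1 - ∑ s ∈ Finset.range n, x s ω) ∂μ := by
    intro n
    induction n with
    | zero => intro _; simp
    | succ n ih =>
      intro hn
      have hnT : n ≤ T := by omega
      rw [ih (by omega), step hle hmono hR_int hS_top hSnell hx hnT,
        Finset.sum_range_succ, Finset.sum_range_succ]
      ring
  have := key (T + 1) le_rfl
  rw [this, hS_top]
  simp


lemma slack (hle : ∀ t, 𝓕 t ≤ mΩ) (hmono : ∀ s t, s ≤ t → 𝓕 s ≤ 𝓕 t)
    {R S : ℕ → Ω → ℝ}
    (hR_int : ∀ t ≤ T, Integrable (R t) μ) (hS_top : S (T + 1) = 0)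
    (hSnell : ∀ t ≤ T, S t =ᵐ[μ] fun ω => max (R t ω) ((μ[S (t + 1)|𝓕 t]) ω))
    {x : ℕ → Ω → ℝ} (hx : FeasibleROS μ T 𝓕 x) {t : ℕ} (ht : t ≤ T) :
    Integrable (fun ω => (S t ω - R t ω) * x t ω) μ ∧
    Integrable (fun ω =>
      (S t ω - (μ[S (t + 1)|𝓕 t]) ω) * (1 - ∑ s ∈ Finset.range (t + 1), x s ω)) μ ∧
    (0 ≤ᵐ[μ] fun ω => (S t ω - R t ω) * x t ω) ∧
    (0 ≤ᵐ[μ] fun ω =>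
      (S t ω - (μ[S (t + 1)|𝓕 t]) ω) * (1 - ∑ s ∈ Finset.range (t + 1), x s ω)) := by
  have hSint := S_int hle hR_int hS_top hSnell
  have hSt : Integrable (S t) μ := hSint t (by omega)
  have hGint : Integrable (μ[S (t + 1)|𝓕 t]) μ := integrable_condExp
  have hxm : AEStronglyMeasurable (x t) μ :=
    ((hx.1 t ht).mono (hle t) le_rfl).aestronglyMeasurable
  have hy'm : AEStronglyMeasurable (fun ω => 1 - ∑ s ∈ Finset.range (t + 1), x s ω) μ := by
    refine (Measurable.aestronglyMeasurable ?_)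
    exact (measurable_const (a := (1:ℝ))).sub
      (Finset.measurable_sum _ fun s hs =>
        ((hx.1 s (by simp at hs; omega)).mono
          ((hmono s t (by simp at hs; omega)).trans (hle t)) le_rfl))
  have hbx : ∀ᵐ ω ∂μ, ‖x t ω‖ ≤ 1 := by
    filter_upwards [feas_bounds hx] with ω h
    have := h.1 t ht
    rw [Real.norm_eq_abs, abs_le]; constructor <;> linarith [this.1, this.2]
  have hby' : ∀ᵐ ω ∂μ, ‖1 - ∑ s ∈ Finset.range (t + 1), x s ω‖ ≤ 1 := by
    filter_upwards [feas_bounds hx] with ω h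
    have := h.2 (t + 1) (by omega)
    rw [Real.norm_eq_abs, abs_le]
    constructor <;> linarith [this.1, this.2]
  refine ⟨by exact mulbdd (hSt.sub (hR_int t ht)) hxm hbx,
    by exact mulbdd (hSt.sub hGint) hy'm hby', ?_, ?_⟩
  · filter_upwards [hSnell t ht, feas_bounds hx] with ω hS hf
    have h1 : R t ω ≤ S t ω := by rw [hS]; exact le_max_left _ _
    have h2 := (hf.1 t ht).1
    simpa using mul_nonneg (by linarith) h2
  · filter_upwards [hSnell t ht, feas_bounds hx] with ω hS hf
    have h1 : (μ[S (t + 1)|𝓕 t]) ω ≤ S t ω := by rw [hS]; exact le_max_right _ _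
    have h2 := (hf.2 (t + 1) (by omega)).2
    simpa using mul_nonneg (by linarith) (by linarith)

lemma value_char (hle : ∀ t, 𝓕 t ≤ mΩ) (hmono : ∀ s t, s ≤ t → 𝓕 s ≤ 𝓕 t)
    {R S : ℕ → Ω → ℝ}
    (hR_int : ∀ t ≤ T, Integrable (R t) μ) (hS_top : S (T + 1) = 0)
    (hSnell : ∀ t ≤ T, S t =ᵐ[μ] fun ω => max (R t ω) ((μ[S (t + 1)|𝓕 t]) ω))
    {x : ℕ → Ω → ℝ} (hx : FeasibleROS μ T 𝓕 x) :
    (∑ t ∈ Finset.range (T + 1), ∫ ω, R t ω * x t ω ∂μ) ≤ ∫ ω, S 0 ω ∂μ ∧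
    ((∑ t ∈ Finset.range (T + 1), ∫ ω, R t ω * x t ω ∂μ) = ∫ ω, S 0 ω ∂μ ↔
      ∀ t ≤ T, ∀ᵐ ω ∂μ, (S t ω - R t ω) * x t ω = 0 ∧
        (S t ω - (μ[S (t + 1)|𝓕 t]) ω) * (1 - ∑ s ∈ Finset.range (t + 1), x s ω) = 0) := by
  have htel := telescope hle hmono hR_int hS_top hSnell hx
  set D : ℕ → ℝ := fun t => (∫ ω, (S t ω - R t ω) * x t ω ∂μ)
    + ∫ ω, (S t ω - (μ[S (t + 1)|𝓕 t]) ω) * (1 - ∑ s ∈ Finset.range (t + 1), x s ω) ∂μ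
    with hD
  have hDnn : ∀ t ∈ Finset.range (T + 1), 0 ≤ D t := by
    intro t htm
    have ht : t ≤ T := by simp at htm; omega
    obtain ⟨_, _, h3, h4⟩ := slack hle hmono hR_int hS_top hSnell hx ht
    exact add_nonneg (integral_nonneg_of_ae h3) (integral_nonneg_of_ae h4)
  constructor
  · have : 0 ≤ ∑ t ∈ Finset.range (T + 1), D t := Finset.sum_nonneg hDnn
    linarith
  · constructor
    · intro hVal
      have hsum0 : ∑ t ∈ Finset.range (T + 1), D t = 0 := by linarith
      have hDt0 : ∀ t ∈ Finset.range (T + 1), D t = 0 :=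
        (Finset.sum_eq_zero_iff_of_nonneg hDnn).1 hsum0
      intro t ht
      obtain ⟨hi1, hi2, h3, h4⟩ := slack hle hmono hR_int hS_top hSnell hx ht
      have hd := hDt0 t (by simp; omega)
      have ha : ∫ ω, (S t ω - R t ω) * x t ω ∂μ = 0 := by
        have := integral_nonneg_of_ae h3
        have := integral_nonneg_of_ae h4
        simp only [hD] at hd
        linarith
      have hb : ∫ ω, (S t ω - (μ[S (t + 1)|𝓕 t]) ω)
          * (1 - ∑ s ∈ Finset.range (t + 1), x s ω) ∂μ = 0 := by
        have := integral_nonneg_of_ae h3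
        simp only [hD] at hd
        linarith
      have e1 := (integral_eq_zero_iff_of_nonneg_ae h3 hi1).1 ha
      have e2 := (integral_eq_zero_iff_of_nonneg_ae h4 hi2).1 hb
      filter_upwards [e1, e2] with ω he1 he2
      exact ⟨he1, he2⟩
    · intro hae
      have hD0 : ∀ t ∈ Finset.range (T + 1), D t = 0 := by
        intro t htm
        have ht : t ≤ T := by simp at htm; omega
        have h1 : ∫ ω, (S t ω - R t ω) * x t ω ∂μ = 0 := by
          rw [integral_congr_ae ((hae t ht).mono fun ω h => h.1)]
          simp
        have h2 : ∫ ω, (S t ω - (μ[S (t + 1)|𝓕 t]) ω)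
            * (1 - ∑ s ∈ Finset.range (t + 1), x s ω) ∂μ = 0 := by
          rw [integral_congr_ae ((hae t ht).mono fun ω h => h.2)]
          simp
        simp only [hD]
        rw [h1, h2]; ring
      rw [htel, Finset.sum_eq_zero hD0]
      ring


lemma C1_iff_C2 (hle : ∀ t, 𝓕 t ≤ mΩ)
    {R S : ℕ → Ω → ℝ}
    (hSnell : ∀ t ≤ T, S t =ᵐ[μ] fun ω => max (R t ω) ((μ[S (t + 1)|𝓕 t]) ω))
    {x : ℕ → Ω → ℝ} (hx : FeasibleROS μ T 𝓕 x) {t : ℕ} (ht : t ≤ T) :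
    (∀ᵐ ω ∂μ, (S t ω - R t ω) * x t ω = 0 ∧
      (S t ω - (μ[S (t + 1)|𝓕 t]) ω) * (1 - ∑ s ∈ Finset.range (t + 1), x s ω) = 0) ↔
    (∀ᵐ ω ∂μ, ∀ ξ : ℝ, 0 ≤ ξ → ξ ≤ 1 - ∑ s ∈ Finset.range t, x s ω →
      (R t ω - (μ[S (t + 1)|𝓕 t]) ω) * ξ ≤ (R t ω - (μ[S (t + 1)|𝓕 t]) ω) * x t ω) := by
  have haux : ∀ᵐ ω ∂μ, S t ω = max (R t ω) ((μ[S (t + 1)|𝓕 t]) ω) ∧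
      0 ≤ x t ω ∧ x t ω ≤ 1 - ∑ s ∈ Finset.range t, x s ω := by
    filter_upwards [hSnell t ht, feas_bounds hx] with ω h1 h2
    refine ⟨h1, (h2.1 t ht).1, ?_⟩
    have := (h2.2 (t + 1) (by omega)).2
    rw [Finset.sum_range_succ] at this
    linarith
  constructor
  · intro h
    filter_upwards [h, haux] with ω hC1 ⟨hs, hx0, hxy⟩
    have := (realEquiv hs hx0 hxy).1
    refine this ⟨hC1.1, ?_⟩
    have h2 := hC1.2
    rw [Finset.sum_range_succ] at h2
    convert h2 using 2
    ring
  · intro h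
    filter_upwards [h, haux] with ω hC2 ⟨hs, hx0, hxy⟩
    have := (realEquiv hs hx0 hxy).2 hC2
    refine ⟨this.1, ?_⟩
    have h2 := this.2
    rw [Finset.sum_range_succ]
    convert h2 using 2
    ring

/-- Any stopping time yields a feasible indicator strategy with the expected value formula. -/
lemma ind_feas (hmono : ∀ s t, s ≤ t → 𝓕 s ≤ 𝓕 t) {R : ℕ → Ω → ℝ}
    (τ : Ω → ℕ) (hτ : ∀ t ≤ T, MeasurableSet[𝓕 t] {ω | τ ω ≤ t}) :
    FeasibleROS μ T 𝓕 (fun t ω => if τ ω = t then 1 else 0) ∧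
    (∀ ω, ∑ t ∈ Finset.range (T + 1), R t ω * (if τ ω = t then (1:ℝ) else 0) =
      if τ ω ≤ T then R (τ ω) ω else 0) ∧
    (∀ ω, ∀ u, ∑ s ∈ Finset.range (u + 1), (if τ ω = s then (1:ℝ) else 0) =
      if τ ω ≤ u then 1 else 0) := by
  have hmeq : ∀ t ≤ T, MeasurableSet[𝓕 t] {ω | τ ω = t} := by
    intro t htT
    match t with
    | 0 =>
      have : {ω | τ ω = 0} = {ω | τ ω ≤ 0} := by ext ω; simp [Nat.le_zero]
      rw [this]; exact hτ 0 htT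
    | Nat.succ n =>
      have : {ω | τ ω = n + 1} = {ω | τ ω ≤ n + 1} \ {ω | τ ω ≤ n} := by
        ext ω; simp; omega
      rw [this]
      exact (hτ (n + 1) htT).diff (hmono n (n + 1) (by omega) _ (hτ n (by omega)))
  have hsum : ∀ ω, ∀ u, ∑ s ∈ Finset.range (u + 1), (if τ ω = s then (1:ℝ) else 0) =
      if τ ω ≤ u then 1 else 0 := by
    intro ω u
    rw [Finset.sum_ite_eq]
    simp [Nat.lt_succ_iff]
  refine ⟨⟨fun t htT => ?_, ?_⟩, fun ω => ?_, hsum⟩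
  · exact Measurable.ite (hmeq t htT) measurable_const measurable_const
  · refine Filter.Eventually.of_forall fun ω => ⟨fun t _ => by positivity, ?_⟩
    rw [hsum ω T]
    split <;> norm_num
  · have : ∀ t, R t ω * (if τ ω = t then (1:ℝ) else 0) = if τ ω = t then R t ω else 0 := by
      intro t; split <;> simp_all
    simp_rw [this]
    rw [Finset.sum_ite_eq]
    simp [Nat.lt_succ_iff]


open Classical in
/-- The canonical optimal stopping time: first time `R` hits the Snell envelope. -/
lemma opt_exists (hle : ∀ t, 𝓕 t ≤ mΩ) (hmono : ∀ s t, s ≤ t → 𝓕 s ≤ 𝓕 t)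
    {R S : ℕ → Ω → ℝ}
    (hR_adapted : ∀ t ≤ T, Measurable[𝓕 t] (R t))
    (hSnell : ∀ t ≤ T, S t =ᵐ[μ] fun ω => max (R t ω) ((μ[S (t + 1)|𝓕 t]) ω)) :
    ∃ τ : Ω → ℕ, (∀ ω, τ ω ≤ T + 1) ∧
      (∀ t ≤ T, MeasurableSet[𝓕 t] {ω | τ ω ≤ t}) ∧
      (∀ t ≤ T, ∀ᵐ ω ∂μ,
        (S t ω - R t ω) * (if τ ω = t then (1:ℝ) else 0) = 0 ∧
        (S t ω - (μ[S (t + 1)|𝓕 t]) ω) * (if τ ω ≤ t then (0:ℝ) else 1) = 0) := by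
  set P : Ω → ℕ → Prop := fun ω t => t ≤ T ∧ (μ[S (t + 1)|𝓕 t]) ω ≤ R t ω with hP
  refine ⟨fun ω => if h : ∃ t, P ω t then Nat.find h else T + 1, ?_, ?_, ?_⟩
  · intro ω
    by_cases h : ∃ t, P ω t
    · simp only [dif_pos h]
      exact le_trans (Nat.find_spec h).1 (by omega)
    · simp [dif_neg h]
  · intro t htT
    have hset : {ω | (if h : ∃ t, P ω t then Nat.find h else T + 1) ≤ t} =
        ⋃ s ∈ Finset.range (t + 1), {ω | (μ[S (s + 1)|𝓕 s]) ω ≤ R s ω} := by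
      ext ω
      simp only [Set.mem_setOf_eq, Set.mem_iUnion, Finset.mem_range, Nat.lt_succ_iff]
      constructor
      · intro hωt
        by_cases h : ∃ t, P ω t
        · rw [dif_pos h] at hωt
          exact ⟨Nat.find h, hωt, (Nat.find_spec h).2⟩
        · rw [dif_neg h] at hωt; omega
      · rintro ⟨s, hst, hs⟩
        have h : ∃ u, P ω u := ⟨s, by omega, hs⟩
        rw [dif_pos h]
        exact le_trans (Nat.find_min' h ⟨by omega, hs⟩) hst
    rw [hset]
    refine MeasurableSet.biUnion (Finset.range (t + 1)).countable_toSet fun s hs => ?_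
    have hsT : s ≤ t := Nat.lt_succ_iff.mp (Finset.mem_range.mp hs)
    have h1 : Measurable[𝓕 s] (μ[S (s + 1)|𝓕 s]) := stronglyMeasurable_condExp.measurable
    have h2 : Measurable[𝓕 t] fun ω => R s ω - (μ[S (s + 1)|𝓕 s]) ω :=
      ((hR_adapted s (by omega)).sub h1).mono (hmono s t hsT) le_rfl
    have : {ω | (μ[S (s + 1)|𝓕 s]) ω ≤ R s ω} =
        (fun ω => R s ω - (μ[S (s + 1)|𝓕 s]) ω) ⁻¹' (Set.Ici 0) := by
      ext ω; simp [sub_nonneg]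
    rw [this]
    exact h2 measurableSet_Ici
  · intro t htT
    have hEqChar : ∀ ω, (if h : ∃ u, P ω u then Nat.find h else T + 1) = t →
        (μ[S (t + 1)|𝓕 t]) ω ≤ R t ω := by
      intro ω heq
      by_cases h : ∃ u, P ω u
      · rw [dif_pos h] at heq
        have hspec := Nat.find_spec h
        rw [heq] at hspec
        exact hspec.2
      · rw [dif_neg h] at heq; omega
    have hGtChar : ∀ ω, ¬((if h : ∃ u, P ω u then Nat.find h else T + 1) ≤ t) →
        R t ω < (μ[S (t + 1)|𝓕 t]) ω := by
      intro ω hgt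
      by_contra hc
      push_neg at hc
      have h : ∃ u, P ω u := ⟨t, htT, hc⟩
      rw [dif_pos h] at hgt
      exact hgt (Nat.find_min' h ⟨htT, hc⟩)
    filter_upwards [hSnell t htT] with ω hS
    constructor
    · by_cases hcase : (if h : ∃ u, P ω u then Nat.find h else T + 1) = t
      · rw [if_pos hcase]
        have h1 : S t ω = R t ω := by rw [hS]; exact max_eq_left (hEqChar ω hcase)
        rw [h1]; ring
      · rw [if_neg hcase]; ring
    · by_cases hcase : (if h : ∃ u, P ω u then Nat.find h else T + 1) ≤ t
      · rw [if_pos hcase]; ring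
      · rw [if_neg hcase]
        have h1 : S t ω = (μ[S (t + 1)|𝓕 t]) ω := by
          rw [hS]; exact max_eq_right (hGtChar ω hcase).le
        rw [h1]; ring


lemma Rx_int (hle : ∀ t, 𝓕 t ≤ mΩ) {R : ℕ → Ω → ℝ}
    (hR_int : ∀ t ≤ T, Integrable (R t) μ)
    {x : ℕ → Ω → ℝ} (hx : FeasibleROS μ T 𝓕 x) {t : ℕ} (ht : t ≤ T) :
    Integrable (fun ω => R t ω * x t ω) μ := by
  have hxm : AEStronglyMeasurable (x t) μ :=
    ((hx.1 t ht).mono (hle t) le_rfl).aestronglyMeasurable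
  have hbx : ∀ᵐ ω ∂μ, ‖x t ω‖ ≤ 1 := by
    filter_upwards [feas_bounds hx] with ω h
    have := h.1 t ht
    rw [Real.norm_eq_abs, abs_le]; constructor <;> linarith [this.1, this.2]
  exact mulbdd (hR_int t ht) hxm hbx

lemma swap_int (hle : ∀ t, 𝓕 t ≤ mΩ) {R : ℕ → Ω → ℝ}
    (hR_int : ∀ t ≤ T, Integrable (R t) μ)
    {x : ℕ → Ω → ℝ} (hx : FeasibleROS μ T 𝓕 x) :
    ∫ ω, ∑ t ∈ Finset.range (T + 1), R t ω * x t ω ∂μ =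
      ∑ t ∈ Finset.range (T + 1), ∫ ω, R t ω * x t ω ∂μ := by
  rw [integral_finset_sum]
  intro t htm
  exact Rx_int hle hR_int hx (Nat.lt_succ_iff.mp (Finset.mem_range.mp htm))

end St18

/-- Theorem 5.3, optimal stopping: the optimum value of the relaxed
stopping problem (ROS) is `E[S₀]`, optimal relaxed strategies are characterized by
scenariowise maximization, and there is an optimal genuine stopping time, so that the
optimum values of (OS) and (ROS) coincide with `E[S₀]`. -/
theorem statement18 {Ω : Type*} {mΩ : MeasurableSpace Ω} (μ : Measure Ω)
    [IsProbabilityMeasure μ] (T : ℕ) (𝓕 : ℕ → MeasurableSpace Ω)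
    (hle : ∀ t, 𝓕 t ≤ mΩ) (hmono : ∀ s t, s ≤ t → 𝓕 s ≤ 𝓕 t)
    (R : ℕ → Ω → ℝ)
    (hR_adapted : ∀ t ≤ T, Measurable[𝓕 t] (R t))
    (hR_int : ∀ t ≤ T, Integrable (R t) μ)
    (S : ℕ → Ω → ℝ)
    (hS_top : S (T + 1) = 0)
    (hS_adapted : ∀ t ≤ T, Measurable[𝓕 t] (S t))
    (hSnell : ∀ t ≤ T, S t =ᵐ[μ] fun ω => max (R t ω) ((μ[S (t + 1)|𝓕 t]) ω)) :
    ((⨆ x : {x : ℕ → Ω → ℝ // FeasibleROS μ T 𝓕 x},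
        ∫ ω, ∑ t ∈ Finset.range (T + 1), R t ω * x.1 t ω ∂μ) = ∫ ω, S 0 ω ∂μ) ∧
    (∀ x : ℕ → Ω → ℝ, FeasibleROS μ T 𝓕 x →
      ((∀ x' : ℕ → Ω → ℝ, FeasibleROS μ T 𝓕 x' →
          ∫ ω, ∑ t ∈ Finset.range (T + 1), R t ω * x' t ω ∂μ ≤
            ∫ ω, ∑ t ∈ Finset.range (T + 1), R t ω * x t ω ∂μ) ↔
        (∀ t ≤ T, ∀ᵐ ω ∂μ, ∀ ξ : ℝ, 0 ≤ ξ → ξ ≤ 1 - ∑ s ∈ Finset.range t, x s ω →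
          (R t ω - (μ[S (t + 1)|𝓕 t]) ω) * ξ ≤
            (R t ω - (μ[S (t + 1)|𝓕 t]) ω) * x t ω))) ∧
    (∃ τ : Ω → ℕ, (∀ ω, τ ω ≤ T + 1) ∧
      (∀ t ≤ T, MeasurableSet[𝓕 t] {ω | τ ω ≤ t}) ∧
      ∫ ω, (if τ ω ≤ T then R (τ ω) ω else 0) ∂μ = ∫ ω, S 0 ω ∂μ) ∧
    ((⨆ τ : {τ : Ω → ℕ // (∀ ω, τ ω ≤ T + 1) ∧
        ∀ t ≤ T, MeasurableSet[𝓕 t] {ω | τ ω ≤ t}},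
        ∫ ω, (if τ.1 ω ≤ T then R (τ.1 ω) ω else 0) ∂μ) = ∫ ω, S 0 ω ∂μ) := by

  classical
  obtain ⟨τ0, hτ0T, hτ0stop, hτ0slack⟩ := St18.opt_exists hle hmono hR_adapted hSnell
  obtain ⟨hfeas0, hval0, hsum0⟩ := St18.ind_feas (μ := μ) (R := R) hmono τ0 hτ0stop
  set x0 : ℕ → Ω → ℝ := fun t ω => if τ0 ω = t then 1 else 0 with hx0def
  -- C1 slack conditions for x0
  have hx0C1 : ∀ t ≤ T, ∀ᵐ ω ∂μ, (S t ω - R t ω) * x0 t ω = 0 ∧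
      (S t ω - (μ[S (t + 1)|𝓕 t]) ω) * (1 - ∑ s ∈ Finset.range (t + 1), x0 s ω) = 0 := by
    intro t ht
    filter_upwards [hτ0slack t ht] with ω h
    refine ⟨h.1, ?_⟩
    rw [hsum0 ω t]
    by_cases hc : τ0 ω ≤ t
    · simp [hc]
    · rw [if_neg hc] at h ⊢
      have := h.2
      linarith [this]
  -- value of x0 is ∫ S 0
  have hval0' : ∑ t ∈ Finset.range (T + 1), ∫ ω, R t ω * x0 t ω ∂μ = ∫ ω, S 0 ω ∂μ :=
    (St18.value_char hle hmono hR_int hS_top hSnell hfeas0).2.mpr hx0C1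
  have hx0val : ∫ ω, ∑ t ∈ Finset.range (T + 1), R t ω * x0 t ω ∂μ = ∫ ω, S 0 ω ∂μ := by
    rw [St18.swap_int hle hR_int hfeas0, hval0']
  -- general bound
  have hbound : ∀ x : ℕ → Ω → ℝ, FeasibleROS μ T 𝓕 x →
      ∫ ω, ∑ t ∈ Finset.range (T + 1), R t ω * x t ω ∂μ ≤ ∫ ω, S 0 ω ∂μ := by
    intro x hx
    rw [St18.swap_int hle hR_int hx]
    exact (St18.value_char hle hmono hR_int hS_top hSnell hx).1
  refine ⟨?_, ?_, ?_, ?_⟩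
  · -- part (i)
    haveI : Nonempty {x : ℕ → Ω → ℝ // FeasibleROS μ T 𝓕 x} := ⟨⟨x0, hfeas0⟩⟩
    have hbdd : BddAbove (Set.range fun x : {x : ℕ → Ω → ℝ // FeasibleROS μ T 𝓕 x} =>
        ∫ ω, ∑ t ∈ Finset.range (T + 1), R t ω * x.1 t ω ∂μ) := by
      refine ⟨∫ ω, S 0 ω ∂μ, ?_⟩
      rintro v ⟨x, rfl⟩
      exact hbound x.1 x.2
    refine le_antisymm (ciSup_le fun x => hbound x.1 x.2) ?_
    exact le_ciSup_of_le hbdd ⟨x0, hfeas0⟩ hx0val.ge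
  · -- part (ii)
    intro x hx
    constructor
    · intro hopt
      have h1 := hopt x0 hfeas0
      rw [hx0val] at h1
      have h2 : ∫ ω, ∑ t ∈ Finset.range (T + 1), R t ω * x t ω ∂μ = ∫ ω, S 0 ω ∂μ :=
        le_antisymm (hbound x hx) h1
      rw [St18.swap_int hle hR_int hx] at h2
      have hC1 := (St18.value_char hle hmono hR_int hS_top hSnell hx).2.mp h2
      intro t ht
      exact (St18.C1_iff_C2 hle hSnell hx ht).mp (hC1 t ht)
    · intro hC2
      have hC1 : ∀ t ≤ T, ∀ᵐ ω ∂μ, (S t ω - R t ω) * x t ω = 0 ∧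
          (S t ω - (μ[S (t + 1)|𝓕 t]) ω) * (1 - ∑ s ∈ Finset.range (t + 1), x s ω) = 0 :=
        fun t ht => (St18.C1_iff_C2 hle hSnell hx ht).mpr (hC2 t ht)
      have h2 : ∑ t ∈ Finset.range (T + 1), ∫ ω, R t ω * x t ω ∂μ = ∫ ω, S 0 ω ∂μ :=
        (St18.value_char hle hmono hR_int hS_top hSnell hx).2.mpr hC1
      intro x' hx'
      calc ∫ ω, ∑ t ∈ Finset.range (T + 1), R t ω * x' t ω ∂μ ≤ ∫ ω, S 0 ω ∂μ :=
            hbound x' hx'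
        _ = ∫ ω, ∑ t ∈ Finset.range (T + 1), R t ω * x t ω ∂μ := by
            rw [St18.swap_int hle hR_int hx, h2]
  · -- part (iii)
    refine ⟨τ0, hτ0T, hτ0stop, ?_⟩
    have : ∫ ω, (if τ0 ω ≤ T then R (τ0 ω) ω else 0) ∂μ =
        ∫ ω, ∑ t ∈ Finset.range (T + 1), R t ω * x0 t ω ∂μ :=
      integral_congr_ae (Filter.Eventually.of_forall fun ω => (hval0 ω).symm)
    rw [this, hx0val]
  · -- part (iv)
    haveI : Nonempty {τ : Ω → ℕ // (∀ ω, τ ω ≤ T + 1) ∧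
        ∀ t ≤ T, MeasurableSet[𝓕 t] {ω | τ ω ≤ t}} := ⟨⟨τ0, hτ0T, hτ0stop⟩⟩
    have hτbound : ∀ τ : {τ : Ω → ℕ // (∀ ω, τ ω ≤ T + 1) ∧
        ∀ t ≤ T, MeasurableSet[𝓕 t] {ω | τ ω ≤ t}},
        ∫ ω, (if τ.1 ω ≤ T then R (τ.1 ω) ω else 0) ∂μ ≤ ∫ ω, S 0 ω ∂μ := by
      rintro ⟨τ, hτT, hτstop⟩
      obtain ⟨hfeas, hval, _⟩ := St18.ind_feas (μ := μ) (R := R) hmono τ hτstop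
      have : ∫ ω, (if τ ω ≤ T then R (τ ω) ω else 0) ∂μ =
          ∫ ω, ∑ t ∈ Finset.range (T + 1), R t ω * (if τ ω = t then (1:ℝ) else 0) ∂μ :=
        integral_congr_ae (Filter.Eventually.of_forall fun ω => (hval ω).symm)
      rw [this]
      exact hbound _ hfeas
    have hτ0val : ∫ ω, (if τ0 ω ≤ T then R (τ0 ω) ω else 0) ∂μ = ∫ ω, S 0 ω ∂μ := by
      have : ∫ ω, (if τ0 ω ≤ T then R (τ0 ω) ω else 0) ∂μ =
          ∫ ω, ∑ t ∈ Finset.range (T + 1), R t ω * x0 t ω ∂μ :=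
        integral_congr_ae (Filter.Eventually.of_forall fun ω => (hval0 ω).symm)
      rw [this, hx0val]
    have hbdd : BddAbove (Set.range fun τ : {τ : Ω → ℕ // (∀ ω, τ ω ≤ T + 1) ∧
        ∀ t ≤ T, MeasurableSet[𝓕 t] {ω | τ ω ≤ t}} =>
        ∫ ω, (if τ.1 ω ≤ T then R (τ.1 ω) ω else 0) ∂μ) := by
      refine ⟨∫ ω, S 0 ω ∂μ, ?_⟩
      rintro v ⟨τ, rfl⟩
      exact hτbound τ
    refine le_antisymm (ciSup_le hτbound) ?_
    exact le_ciSup_of_le hbdd ⟨τ0, hτ0T, hτ0stop⟩ hτ0val.ge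
end
end

section
/- Let f : ℝⁿ×ℝ^m → ℝ∪{+∞} be a proper lower semicontinuous convex function and suppose N := { x ∈ ℝⁿ : f^∞((x,0)) ≤ 0 } is a linear subspace of ℝⁿ, where f^∞ is the recession function of f. Then p(u) := inf_{x∈ℝⁿ} f(x,u) is a convex lower semicontinuous function of u (with values in [−∞,+∞]); for every u ∈ ℝ^m the set argmin_{x∈ℝⁿ} f(x,u) ∩ N^⊥ is nonempty (in particular the infimum defining p(u) is attained); and if p is proper, then p^∞(u) = inf_{x∈ℝⁿ} f^∞((x,u)) for all u ∈ ℝ^m. -/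
open MeasureTheory ENNReal
open scoped RealInnerProductSpace

noncomputable section

namespace PaperDP

variable {Ω : Type*}

/-- The positive part of an extended real number, as an element of `ℝ≥0∞`. -/
def ePos (x : EReal) : ℝ≥0∞ := if x = ⊤ then ⊤ else ENNReal.ofReal x.toReal

/-- The extended integral of an extended-real-valued function: it is `+∞` unless the
positive part of the integrand is integrable, in which case it is the difference of the
integrals of the positive and negative parts. -/
def EInt {mΩ : MeasurableSpace Ω} (μ : Measure Ω) (ξ : Ω → EReal) : EReal :=
  if (∫⁻ ω, ePos (ξ ω) ∂μ) = ⊤ then ⊤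
  else ((∫⁻ ω, ePos (ξ ω) ∂μ : ℝ≥0∞) : EReal) - ((∫⁻ ω, ePos (-(ξ ω)) ∂μ : ℝ≥0∞) : EReal)

/-- An extended-real-valued random variable is quasi-integrable if its positive part or
its negative part is integrable. -/
def QuasiIntegrable {mΩ : MeasurableSpace Ω} (μ : Measure Ω) (ξ : Ω → EReal) : Prop :=
  (∫⁻ ω, ePos (ξ ω) ∂μ) ≠ ⊤ ∨ (∫⁻ ω, ePos (-(ξ ω)) ∂μ) ≠ ⊤

/-- `ξ'` is a version of the `G`-conditional expectation of the extended-real random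
variable `ξ`: it is `G`-measurable and satisfies `E[α ξ'] = E[α ξ]` for every bounded
nonnegative `G`-measurable real `α`. -/
def IsCondExpER {mΩ : MeasurableSpace Ω} (μ : Measure Ω) (G : MeasurableSpace Ω)
    (ξ ξ' : Ω → EReal) : Prop :=
  Measurable[G] ξ' ∧
  ∀ α : Ω → ℝ, Measurable[G] α → (∀ ω, 0 ≤ α ω) → (∃ C, ∀ ω, α ω ≤ C) →
    EInt μ (fun ω => (α ω : EReal) * ξ' ω) = EInt μ (fun ω => (α ω : EReal) * ξ ω)

/-- A normal integrand with respect to the σ-algebra `m` on `Ω`: a jointly measurable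
function (with respect to `B(E) ⊗ m`) with values in `ℝ ∪ {+∞}` which is lower
semicontinuous in its first argument. -/
def IsNormalIntegrand {E : Type*} [TopologicalSpace E] [MeasurableSpace E]
    (m : MeasurableSpace Ω) (h : E → Ω → EReal) : Prop :=
  Measurable[MeasurableSpace.prod inferInstance m] (fun p : E × Ω => h p.1 p.2) ∧
  (∀ ω, LowerSemicontinuous fun x => h x ω) ∧ ∀ x ω, h x ω ≠ ⊥

/-- `h` is L-bounded: `h(x,ω) ≥ -ρ(ω)‖x‖ - m(ω)` for integrable nonnegative `ρ, m`. -/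
def LBounded {E : Type*} [NormedAddCommGroup E] {mΩ : MeasurableSpace Ω} (μ : Measure Ω)
    (h : E → Ω → EReal) : Prop :=
  ∃ ρ m : Ω → ℝ, Integrable ρ μ ∧ Integrable m μ ∧ (∀ ω, 0 ≤ ρ ω) ∧ (∀ ω, 0 ≤ m ω) ∧
    ∀ᵐ ω ∂μ, ∀ x : E, (↑(-(ρ ω * ‖x‖ + m ω)) : EReal) ≤ h x ω

/-- `hG` is a `G`-conditional expectation of the normal integrand `h`: it is a
`B(E) ⊗ G`-measurable normal integrand such that `hG(x(·),·)` is a version of the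
`G`-conditional expectation of `h(x(·),·)` for every `G`-measurable `x` for which
`h(x(·),·)` is quasi-integrable. -/
def IsCondNI {E : Type*} [TopologicalSpace E] [MeasurableSpace E] {mΩ : MeasurableSpace Ω}
    (μ : Measure Ω) (G : MeasurableSpace Ω) (h hG : E → Ω → EReal) : Prop :=
  IsNormalIntegrand G hG ∧
  ∀ x : Ω → E, Measurable[G] x → QuasiIntegrable μ (fun ω => h (x ω) ω) →
    IsCondExpER μ G (fun ω => h (x ω) ω) (fun ω => hG (x ω) ω)

/-- The recession function of `g`: `g^∞(y) = sup_{r>0} (g(z + r y) - g(z))/r`, where `z`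
is any point with `g(z) < ∞` (for a proper lsc convex function the value does not depend
on the choice of `z`; we take the infimum over all such `z`). -/
def recessionFn {E : Type*} [AddCommGroup E] [Module ℝ E] (g : E → EReal) (y : E) : EReal :=
  ⨅ z : {z : E // g z < ⊤}, ⨆ r : {r : ℝ // 0 < r},
    ((r.1⁻¹ : ℝ) : EReal) * (g (z.1 + r.1 • y) - g z.1)

/-- Convexity of an extended-real-valued function. -/
def ConvexEFn {E : Type*} [AddCommGroup E] [Module ℝ E] (g : E → EReal) : Prop :=
  ∀ x y : E, ∀ a b : ℝ, 0 ≤ a → 0 ≤ b → a + b = 1 →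
    g (a • x + b • y) ≤ (a : EReal) * g x + (b : EReal) * g y

/-- A convex integrand: `h(·,ω)` is convex for every `ω`. -/
def ConvexIntegrand {E : Type*} [AddCommGroup E] [Module ℝ E]
    (h : E → Ω → EReal) : Prop :=
  ∀ ω, ConvexEFn (fun x => h x ω)


section Aux

variable {E : Type*} [AddCommGroup E] [Module ℝ E]

/-- Difference quotient. -/
def Q (g : E → EReal) (z y : E) (r : ℝ) : EReal :=
  ((r⁻¹ : ℝ) : EReal) * (g (z + r • y) - g z)

/-- Slope supremum at base point `z`. -/
def slopeSup (g : E → EReal) (z y : E) : EReal :=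
  ⨆ r : {r : ℝ // 0 < r}, Q g z y r.1

lemma recessionFn_def (g : E → EReal) (y : E) :
    recessionFn g y = ⨅ z : {z : E // g z < ⊤}, slopeSup g z.1 y := rfl

lemma emul_le_emul_left {a : ℝ} (ha : 0 ≤ a) {x y : EReal} (h : x ≤ y) :
    (a : EReal) * x ≤ (a : EReal) * y := by
  rcases ha.eq_or_lt with rfl | ha
  · simp only [EReal.coe_zero, EReal.zero_mul, le_refl]
  induction x using EReal.rec with
  | bot => simp [EReal.coe_mul_bot_of_pos ha]
  | top => rw [top_le_iff.1 h]
  | coe x =>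
    induction y using EReal.rec with
    | bot => exact absurd h (by simp)
    | top => simp [EReal.coe_mul_top_of_pos ha]
    | coe y =>
      rw [← EReal.coe_mul, ← EReal.coe_mul, EReal.coe_le_coe_iff]
      exact mul_le_mul_of_nonneg_left (by exact_mod_cast h) ha.le

lemma Q_le_iff {g : E → EReal} (hbot : ∀ w, g w ≠ ⊥) {z : E} {c : ℝ} (hz : g z = ↑c)
    {y : E} {r : ℝ} (hr : 0 < r) {μ : ℝ} :
    Q g z y r ≤ (μ : EReal) ↔ g (z + r • y) ≤ ((c + r * μ : ℝ) : EReal) := by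
  unfold Q
  rw [hz]
  by_cases htop : g (z + r • y) = ⊤
  · rw [htop, EReal.top_sub_coe, EReal.coe_mul_top_of_pos (by positivity)]
    simp only [top_le_iff]
    exact iff_of_false (EReal.coe_ne_top _) (EReal.coe_ne_top _)
  · obtain ⟨G, hG⟩ : ∃ G : ℝ, g (z + r • y) = (G : EReal) :=
      ⟨_, (EReal.coe_toReal htop (hbot _)).symm⟩
    rw [hG, ← EReal.coe_sub, ← EReal.coe_mul, EReal.coe_le_coe_iff, EReal.coe_le_coe_iff,
      inv_mul_le_iff₀ hr, sub_le_iff_le_add']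

lemma Q_le_S {g : E → EReal} {z y : E} {r : ℝ} (hr : 0 < r) : Q g z y r ≤ slopeSup g z y :=
  le_iSup (fun r : {r : ℝ // 0 < r} => Q g z y r.1) ⟨r, hr⟩

lemma S_le_iff {g : E → EReal} (hbot : ∀ w, g w ≠ ⊥) {z : E} {c : ℝ} (hz : g z = ↑c)
    {y : E} {μ : ℝ} :
    slopeSup g z y ≤ (μ : EReal) ↔ ∀ r : ℝ, 0 < r → g (z + r • y) ≤ ((c + r * μ : ℝ) : EReal) := by
  constructor
  · intro h r hr
    exact (Q_le_iff hbot hz hr).1 ((Q_le_S hr).trans h)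
  · intro h
    exact iSup_le fun r => (Q_le_iff hbot hz r.2).2 (h r.1 r.2)

lemma bot_lt_S {g : E → EReal} (hbot : ∀ w, g w ≠ ⊥) {z : E} {c : ℝ} (hz : g z = ↑c)
    (y : E) : (⊥ : EReal) < slopeSup g z y := by
  refine lt_of_lt_of_le ?_ (Q_le_S (g := g) (z := z) (y := y) one_pos)
  unfold Q
  rw [hz]
  by_cases htop : g (z + (1:ℝ) • y) = ⊤
  · rw [htop, EReal.top_sub_coe, EReal.coe_mul_top_of_pos (by norm_num)]
    exact bot_lt_top
  · obtain ⟨G, hG⟩ : ∃ G : ℝ, g (z + (1:ℝ) • y) = (G : EReal) :=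
      ⟨_, (EReal.coe_toReal htop (hbot _)).symm⟩
    rw [hG, ← EReal.coe_sub, ← EReal.coe_mul]
    exact EReal.bot_lt_coe _

/-- Monotonicity of difference quotients, in "bound" form. -/
lemma bound_of_bound_ge {g : E → EReal} (hg : ConvexEFn g) (hbot : ∀ w, g w ≠ ⊥)
    {z : E} {c : ℝ} (hz : g z = ↑c) {y : E} {r r' μ : ℝ} (hr : 0 < r) (hrr' : r ≤ r')
    (h : g (z + r' • y) ≤ ((c + r' * μ : ℝ) : EReal)) :
    g (z + r • y) ≤ ((c + r * μ : ℝ) : EReal) := by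
  have hr' : 0 < r' := hr.trans_le hrr'
  obtain ⟨G, hG⟩ : ∃ G : ℝ, g (z + r' • y) = (G : EReal) :=
    ⟨_, (EReal.coe_toReal (fun ht => by rw [ht, top_le_iff] at h; exact EReal.coe_ne_top _ h) (hbot _)).symm⟩
  rw [hG, EReal.coe_le_coe_iff] at h
  have hb0 : (0:ℝ) ≤ r / r' := by positivity
  have hb1 : r / r' ≤ 1 := div_le_one_of_le₀ hrr' hr'.le
  have hcomb : (1 - r / r') • z + (r / r') • (z + r' • y) = z + r • y := by
    rw [smul_add, smul_smul, div_mul_cancel₀ _ hr'.ne']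
    module
  have hcvx := hg z (z + r' • y) (1 - r / r') (r / r') (by linarith) hb0 (by ring)
  rw [hcomb, hz, hG, ← EReal.coe_mul, ← EReal.coe_mul, ← EReal.coe_add] at hcvx
  refine hcvx.trans ?_
  rw [EReal.coe_le_coe_iff]
  have h2 : (r / r') * G ≤ (r / r') * (c + r' * μ) := mul_le_mul_of_nonneg_left h hb0
  have h3 : (r / r') * r' = r := div_mul_cancel₀ r hr'.ne'
  have h4 : (r / r') * (c + r' * μ) = (r / r') * c + r * μ := by
    rw [mul_add, ← mul_assoc, h3]
  linarith [h2, h4]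


end Aux

section Top
open Filter Topology


open Filter Topology

lemma isClosed_le_of_lsc {X : Type*} [TopologicalSpace X] {F G : X → EReal}
    (hF : LowerSemicontinuous F) (hG : Continuous G) : IsClosed {x | F x ≤ G x} := by
  rw [← isOpen_compl_iff, isOpen_iff_mem_nhds]
  intro x hx
  simp only [Set.mem_compl_iff, Set.mem_setOf_eq, not_le] at hx
  obtain ⟨c, hc1, hc2⟩ := EReal.exists_between_coe_real hx
  have h1 : ∀ᶠ y in 𝓝 x, (c : EReal) < F y := hF x _ hc2
  have h2 : ∀ᶠ y in 𝓝 x, G y < (c : EReal) :=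
    (hG.tendsto x).eventually (Filter.Tendsto.eventually_lt_const hc1 tendsto_id)
  filter_upwards [h1, h2] with y hy1 hy2
  simp only [Set.mem_compl_iff, Set.mem_setOf_eq, not_le]
  exact hy2.trans hy1

lemma lsc_le_of_tendsto {X : Type*} [TopologicalSpace X] {F : X → EReal}
    (hF : LowerSemicontinuous F) {z : ℕ → X} {x : X} (hz : Tendsto z atTop (𝓝 x))
    {y : EReal} (hy : ∀ k, F (z k) ≤ y) : F x ≤ y := by
  by_contra h
  push_neg at h
  obtain ⟨c, hc1, hc2⟩ := EReal.exists_between_coe_real h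
  obtain ⟨k, hk⟩ := (hz.eventually (hF x _ hc2)).exists
  exact absurd ((hy k).trans_lt hc1) (not_lt.2 hk.le)

variable {E : Type*} [AddCommGroup E] [Module ℝ E] [TopologicalSpace E]
  [IsTopologicalAddGroup E] [ContinuousSMul ℝ E]

lemma recession_transfer {A : Set E} (hA : Convex ℝ A) (hAc : IsClosed A)
    {c c' : E} (hc : c ∈ A) (hc' : c' ∈ A) {d : E}
    (h : ∀ t : ℝ, 0 ≤ t → c + t • d ∈ A) :
    ∀ t : ℝ, 0 ≤ t → c' + t • d ∈ A := by
  intro t ht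
  rcases ht.eq_or_lt with rfl | ht
  · simpa using hc'
  have key : ∀ ε : ℝ, 0 < ε → ε ≤ 1 → c' + ε • (c - c') + t • d ∈ A := by
    intro ε hε0 hε1
    have h1 : c + (t / ε) • d ∈ A := h _ (by positivity)
    have h2 := hA hc' h1 (by linarith : (0:ℝ) ≤ 1 - ε) hε0.le (by ring)
    have h3 : (1 - ε) • c' + ε • (c + (t / ε) • d) = c' + ε • (c - c') + t • d := by
      rw [smul_add, smul_smul, mul_div_cancel₀ _ hε0.ne']
      module
    rwa [h3] at h2
  have hlim : Tendsto (fun ε : ℝ => c' + ε • (c - c') + t • d) (𝓝[>] 0)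
      (𝓝 (c' + t • d)) := by
    have hcont : Continuous (fun ε : ℝ => c' + ε • (c - c') + t • d) := by
      continuity
    have h0 := hcont.tendsto 0
    simp only [zero_smul, add_zero] at h0
    exact (h0.mono_left nhdsWithin_le_nhds)
  refine hAc.mem_of_tendsto hlim ?_
  have hev1 : ∀ᶠ ε in 𝓝[>] (0:ℝ), 0 < ε := eventually_mem_nhdsWithin
  have hev2 : ∀ᶠ ε in 𝓝[>] (0:ℝ), ε < 1 :=
    eventually_nhdsWithin_of_eventually_nhds (Filter.Tendsto.eventually_lt_const (by norm_num) tendsto_id)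
  filter_upwards [hev1, hev2] with ε h1 h2
  exact key ε h1 h2.le


end Top

section Core
open Filter Topology

variable {E : Type*} [NormedAddCommGroup E] [NormedSpace ℝ E]

lemma convex_epi {g : E → EReal} (hg : ConvexEFn g) :
    Convex ℝ {p : E × ℝ | g p.1 ≤ ((p.2 : ℝ) : EReal)} := by
  rintro ⟨x, α⟩ hx ⟨y, β⟩ hy a b ha hb hab
  simp only [Set.mem_setOf_eq] at *
  have h := hg x y a b ha hb hab
  refine h.trans ?_
  calc (a : EReal) * g x + (b : EReal) * g y
      ≤ (a : EReal) * (α : EReal) + (b : EReal) * (β : EReal) := by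
        exact add_le_add (emul_le_emul_left ha hx) (emul_le_emul_left hb hy)
    _ = (((a • (x, α) + b • (y, β) : E × ℝ).2 : ℝ) : EReal) := by
        simp only [Prod.smul_snd, Prod.snd_add, smul_eq_mul]
        rw [← EReal.coe_mul, ← EReal.coe_mul, ← EReal.coe_add]

lemma isClosed_epi {g : E → EReal} (hlsc : LowerSemicontinuous g) :
    IsClosed {p : E × ℝ | g p.1 ≤ ((p.2 : ℝ) : EReal)} :=
  isClosed_le_of_lsc (hlsc.comp continuous_fst)
    (continuous_coe_real_ereal.comp continuous_snd)

lemma S_le_S {g : E → EReal} (hlsc : LowerSemicontinuous g) (hg : ConvexEFn g)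
    (hbot : ∀ w, g w ≠ ⊥) {z z' : E} {c c' : ℝ} (hz : g z = ↑c) (hz' : g z' = ↑c')
    (y : E) : slopeSup g z y ≤ slopeSup g z' y := by
  by_cases htop : slopeSup g z' y = ⊤
  · exact htop ▸ le_top
  obtain ⟨μ, hμ⟩ : ∃ μ : ℝ, slopeSup g z' y = (μ : EReal) :=
    ⟨_, (EReal.coe_toReal htop (bot_lt_S hbot hz' y).ne').symm⟩
  rw [hμ, S_le_iff hbot hz]
  intro r hr
  have h1 : ∀ t : ℝ, 0 ≤ t →
      (z', c') + t • (y, μ) ∈ {p : E × ℝ | g p.1 ≤ ((p.2 : ℝ) : EReal)} := by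
    intro t ht
    rcases ht.eq_or_lt with rfl | ht
    · simp only [zero_smul, add_zero, Set.mem_setOf_eq, hz', le_refl]
    · have := (S_le_iff hbot hz').1 hμ.le t ht
      simpa only [Set.mem_setOf_eq, Prod.fst_add, Prod.snd_add, Prod.smul_mk,
        smul_eq_mul, EReal.coe_add, EReal.coe_mul] using this
  have h2 := recession_transfer (convex_epi hg) (isClosed_epi hlsc)
      (c := (z', c')) (c' := (z, c)) (by simp [Set.mem_setOf_eq, hz'])
      (by simp [Set.mem_setOf_eq, hz]) h1 r hr.le
  simpa only [Set.mem_setOf_eq, Prod.fst_add, Prod.snd_add, Prod.smul_mk,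
    smul_eq_mul, EReal.coe_add, EReal.coe_mul] using h2

lemma recessionFn_eq_S {g : E → EReal} (hlsc : LowerSemicontinuous g) (hg : ConvexEFn g)
    (hbot : ∀ w, g w ≠ ⊥) {z : E} {c : ℝ} (hz : g z = ↑c) (y : E) :
    recessionFn g y = slopeSup g z y := by
  rw [recessionFn_def]
  apply le_antisymm
  · exact iInf_le (fun w : {w : E // g w < ⊤} => slopeSup g w.1 y)
      ⟨z, by rw [hz]; exact EReal.coe_lt_top c⟩
  · refine le_iInf ?_
    rintro ⟨w, hw⟩
    obtain ⟨cw, hcw⟩ : ∃ cw : ℝ, g w = (cw : EReal) :=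
      ⟨_, (EReal.coe_toReal hw.ne (hbot w)).symm⟩
    exact S_le_S hlsc hg hbot hz hcw y

lemma recessionFn_le_of_bound {g : E → EReal} (hbot : ∀ w, g w ≠ ⊥) {z : E} {c : ℝ}
    (hz : g z = ↑c) {y : E} {μ : ℝ}
    (h : ∀ r : ℝ, 0 < r → g (z + r • y) ≤ ((c + r * μ : ℝ) : EReal)) :
    recessionFn g y ≤ (μ : EReal) := by
  rw [recessionFn_def]
  exact (iInf_le (fun w : {w : E // g w < ⊤} => slopeSup g w.1 y)
    ⟨z, by rw [hz]; exact EReal.coe_lt_top c⟩).trans ((S_le_iff hbot hz).2 h)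

lemma recessionFn_nonpos_of_bound {g : E → EReal} (hg : ConvexEFn g)
    (hbot : ∀ w, g w ≠ ⊥) {z : E} {c : ℝ} (hz : g z = ↑c) {y : E} {α : ℝ}
    (h : ∀ r : ℝ, 0 < r → g (z + r • y) ≤ (α : EReal)) :
    recessionFn g y ≤ 0 := by
  by_contra hcon
  push_neg at hcon
  obtain ⟨ε, hε0, hε1⟩ := EReal.exists_between_coe_real hcon
  have hε0' : (0 : ℝ) < ε := by exact_mod_cast hε0
  have : recessionFn g y ≤ (ε : EReal) := by
    apply recessionFn_le_of_bound hbot hz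
    intro r hr
    set r' : ℝ := max r ((α - c) / ε) + 1 with hr'def
    have hrr' : r ≤ r' := by
      rw [hr'def]; have := le_max_left r ((α - c) / ε); linarith
    have hr'0 : 0 < r' := lt_of_lt_of_le hr hrr'
    have hb : g (z + r' • y) ≤ ((c + r' * ((α - c) / r') : ℝ) : EReal) := by
      have : c + r' * ((α - c) / r') = α := by field_simp; ring
      rw [this]
      exact h r' hr'0
    have h2 := bound_of_bound_ge hg hbot hz hr hrr' hb
    refine h2.trans ?_
    rw [EReal.coe_le_coe_iff]
    have h3 : (α - c) / r' ≤ ε := by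
      rw [div_le_iff₀ hr'0]
      have : (α - c) / ε ≤ r' := by
        rw [hr'def]; have := le_max_right r ((α - c) / ε); linarith
      calc α - c = ε * ((α - c) / ε) := by field_simp
        _ ≤ ε * r' := by nlinarith
    have h4 : r * ((α - c) / r') ≤ r * ε := mul_le_mul_of_nonneg_left h3 hr.le
    linarith
  exact absurd (hε1.trans_le this) (lt_irrefl _)

lemma le_of_recession_nonpos {g : E → EReal} (hlsc : LowerSemicontinuous g)
    (hg : ConvexEFn g) (hbot : ∀ w, g w ≠ ⊥) {z : E} {c : ℝ} (hz : g z = ↑c) {y : E}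
    (h : recessionFn g y ≤ 0) : g (z + y) ≤ g z := by
  have h0 : Q g z y 1 ≤ ((0 : ℝ) : EReal) := by
    refine (Q_le_S one_pos).trans ?_
    rw [← recessionFn_eq_S hlsc hg hbot hz y]
    simpa using h
  have h1 := (Q_le_iff hbot hz one_pos).1 h0
  rw [hz]
  simpa using h1

end Core


section Geometry
open Filter Topology Bornology

variable {E : Type*} [NormedAddCommGroup E] [NormedSpace ℝ E] [ProperSpace E]

lemma exists_recession_dir {A : Set E} (hconv : Convex ℝ A) (hclosed : IsClosed A)
    {c : E} (hc : c ∈ A) (hnb : ¬ IsBounded A) :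
    ∃ d : E, d ≠ 0 ∧ ∀ t : ℝ, 0 ≤ t → c + t • d ∈ A := by
  have hx : ∀ k : ℕ, ∃ x, x ∈ A ∧ (k : ℝ) + 1 ≤ ‖x - c‖ := by
    intro k
    by_contra h
    push_neg at h
    refine hnb ((Metric.isBounded_iff_subset_closedBall c).2 ⟨k + 1, fun x hxA => ?_⟩)
    have := (h x hxA).le
    simp only [Metric.mem_closedBall, dist_eq_norm]
    linarith
  choose x hxA hxn using hx
  set dseq : ℕ → E := fun k => ‖x k - c‖⁻¹ • (x k - c) with hdseq
  have hnorm_pos : ∀ k, (0 : ℝ) < ‖x k - c‖ := fun k =>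
    lt_of_lt_of_le (by positivity) (hxn k)
  have hmem : ∀ k, dseq k ∈ Metric.sphere (0 : E) 1 := by
    intro k
    simp only [hdseq, Metric.mem_sphere, dist_zero_right, norm_smul, norm_inv, norm_norm]
    exact inv_mul_cancel₀ (hnorm_pos k).ne'
  obtain ⟨d, hdmem, φ, hφ, hd⟩ := (isCompact_sphere (0 : E) 1).tendsto_subseq hmem
  have hd0 : d ≠ 0 := by
    intro h
    rw [h] at hdmem
    simp at hdmem
  refine ⟨d, hd0, fun t ht => ?_⟩
  rcases ht.eq_or_lt with rfl | ht
  · simpa using hc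
  have hmemA : ∀ k, t ≤ ‖x (φ k) - c‖ → c + t • dseq (φ k) ∈ A := by
    intro k hk
    have hn := hnorm_pos (φ k)
    have h1 : c + t • dseq (φ k)
        = (1 - t * ‖x (φ k) - c‖⁻¹) • c + (t * ‖x (φ k) - c‖⁻¹) • (x (φ k)) := by
      simp only [hdseq, smul_smul]
      module
    have hw0 : 0 ≤ t * ‖x (φ k) - c‖⁻¹ := by positivity
    have hw1 : t * ‖x (φ k) - c‖⁻¹ ≤ 1 := by
      rw [← div_eq_mul_inv, div_le_one hn]
      exact hk
    rw [h1]
    exact hconv hc (hxA (φ k)) (by linarith) hw0 (by ring)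
  have hev : ∀ᶠ k in atTop, c + t • dseq (φ k) ∈ A := by
    refine (eventually_atTop.2 ⟨⌈t⌉₊, fun k hk => ?_⟩).mono fun k hk => hmemA k hk
    have h1 : t ≤ (⌈t⌉₊ : ℝ) := Nat.le_ceil t
    have h2 : (⌈t⌉₊ : ℝ) ≤ (φ k : ℝ) := by
      exact_mod_cast hk.trans (hφ.le_apply)
    have := hxn (φ k)
    linarith
  have hlim : Tendsto (fun k => c + t • dseq (φ k)) atTop (𝓝 (c + t • d)) :=
    tendsto_const_nhds.add (hd.const_smul t)
  exact hclosed.mem_of_tendsto hlim hev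

lemma isCompact_of_no_recession {A : Set E} (hconv : Convex ℝ A) (hclosed : IsClosed A)
    {c : E} (hc : c ∈ A) (h : ∀ d : E, (∀ t : ℝ, 0 ≤ t → c + t • d ∈ A) → d = 0) :
    IsCompact A := by
  by_contra hK
  have hnb : ¬ IsBounded A := fun hb =>
    hK (Metric.isCompact_of_isClosed_isBounded hclosed hb)
  obtain ⟨d, hd0, hd⟩ := exists_recession_dir hconv hclosed hc hnb
  exact hd0 (h d hd)

lemma exists_min_lsc {X : Type*} [TopologicalSpace X] [T2Space X] {A : Set X}
    (hA : IsCompact A) (hne : A.Nonempty) {F : X → EReal} (hF : LowerSemicontinuous F) :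
    ∃ a ∈ A, ∀ b ∈ A, F a ≤ F b := by
  set m : EReal := ⨅ b : A, F b.1 with hm
  by_cases htop : m = ⊤
  · obtain ⟨a, ha⟩ := hne
    refine ⟨a, ha, fun b hb => ?_⟩
    have : F b = ⊤ := top_le_iff.1 (htop ▸ iInf_le (fun b : A => F b.1) ⟨b, hb⟩)
    rw [this]
    exact le_top
  have hlt : m < ⊤ := lt_of_le_of_ne le_top htop
  have hι : Nonempty {c : ℝ // m < (c : EReal)} := by
    obtain ⟨c, hc1, _⟩ := EReal.exists_between_coe_real hlt
    exact ⟨⟨c, hc1⟩⟩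
  set B : {c : ℝ // m < (c : EReal)} → Set X := fun c => {b ∈ A | F b ≤ (c.1 : EReal)}
    with hB
  have hclosed : ∀ c, IsClosed (B c) := by
    intro c
    exact hA.isClosed.inter (lowerSemicontinuous_iff_isClosed_preimage.1 hF c.1)
  have hcompact : ∀ c, IsCompact (B c) := fun c =>
    hA.of_isClosed_subset (hclosed c) (fun b hb => hb.1)
  have hnonempty : ∀ c, (B c).Nonempty := by
    rintro ⟨c, hc⟩
    rw [hm, iInf_lt_iff] at hc
    obtain ⟨⟨b, hbA⟩, hb⟩ := hc
    exact ⟨b, hbA, hb.le⟩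
  have hdir : Directed (· ⊇ ·) B := by
    rintro ⟨c, hc⟩ ⟨c', hc'⟩
    have hmin : m < ((min c c' : ℝ) : EReal) := by
      rcases min_cases c c' with ⟨h1, _⟩ | ⟨h1, _⟩ <;> rw [h1]
      exacts [hc, hc']
    refine ⟨⟨min c c', hmin⟩, ?_, ?_⟩
    · rintro b ⟨hbA, hb⟩
      exact ⟨hbA, hb.trans (by exact_mod_cast min_le_left c c')⟩
    · rintro b ⟨hbA, hb⟩
      exact ⟨hbA, hb.trans (by exact_mod_cast min_le_right c c')⟩
  obtain ⟨a, ha⟩ := IsCompact.nonempty_iInter_of_directed_nonempty_isCompact_isClosed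
    B hdir hnonempty hcompact hclosed
  simp only [Set.mem_iInter] at ha
  have haA : a ∈ A := (ha (Classical.arbitrary _)).1
  refine ⟨a, haA, fun b hb => ?_⟩
  have ham : F a ≤ m := by
    by_contra hcon
    push_neg at hcon
    obtain ⟨c, hc1, hc2⟩ := EReal.exists_between_coe_real hcon
    exact absurd ((ha ⟨c, hc1⟩).2) (not_le.2 hc2)
  exact ham.trans (iInf_le (fun b : A => F b.1) ⟨b, hb⟩)

end Geometry

section Main
open Filter Topology
open scoped RealInnerProductSpace

variable {n m : ℕ} {f : EuclideanSpace ℝ (Fin n) × EuclideanSpace ℝ (Fin m) → EReal}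
  {S : Submodule ℝ (EuclideanSpace ℝ (Fin n))}

lemma constancy (hlsc : LowerSemicontinuous f) (hconv : ConvexEFn f)
    (hbot : ∀ z, f z ≠ ⊥)
    (hS : {x : EuclideanSpace ℝ (Fin n) | recessionFn f (x, 0) ≤ 0} = ↑S)
    {y : EuclideanSpace ℝ (Fin n)} (hy : y ∈ S)
    (w : EuclideanSpace ℝ (Fin n) × EuclideanSpace ℝ (Fin m)) :
    f (w + (y, 0)) = f w := by
  have step : ∀ v : EuclideanSpace ℝ (Fin n), recessionFn f (v, 0) ≤ 0 →
      ∀ w', f w' ≠ ⊤ → f (w' + (v, 0)) ≤ f w' := by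
    intro v hv w' hw'
    obtain ⟨c, hc⟩ : ∃ c : ℝ, f w' = (c : EReal) :=
      ⟨_, (EReal.coe_toReal hw' (hbot w')).symm⟩
    rw [hc]
    have h := le_of_recession_nonpos hlsc hconv hbot hc hv
    rwa [hc] at h
  have hy' : recessionFn f (y, 0) ≤ 0 := (Set.ext_iff.1 hS y).2 hy
  have hyneg : recessionFn f (-y, 0) ≤ 0 := (Set.ext_iff.1 hS (-y)).2 (S.neg_mem hy)
  have hcancel : ∀ w' : EuclideanSpace ℝ (Fin n) × EuclideanSpace ℝ (Fin m),
      w' + (y, 0) + (-y, 0) = w' := by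
    intro w'
    have h00 : ((y, 0) : EuclideanSpace ℝ (Fin n) × EuclideanSpace ℝ (Fin m)) + (-y, 0) = 0 := by
      simp [Prod.ext_iff]
    rw [add_assoc, h00, add_zero]
  by_cases hw : f w = ⊤
  · by_contra hne
    have hne' : f (w + (y, 0)) ≠ ⊤ := fun h => hne (h.trans hw.symm)
    have h2 := step (-y) hyneg (w + (y, 0)) hne'
    rw [hcancel w, hw] at h2
    exact hne' (top_le_iff.1 h2)
  · have h1 := step y hy' w hw
    have hne' : f (w + (y, 0)) ≠ ⊤ := fun h =>
      hw (top_le_iff.1 (h ▸ h1))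
    have h2 := step (-y) hyneg (w + (y, 0)) hne'
    rw [hcancel w] at h2
    exact le_antisymm h1 h2

lemma attain (hlsc : LowerSemicontinuous f) (hconv : ConvexEFn f)
    (hbot : ∀ z, f z ≠ ⊥)
    (hS : {x : EuclideanSpace ℝ (Fin n) | recessionFn f (x, 0) ≤ 0} = ↑S)
    (u : EuclideanSpace ℝ (Fin m)) :
    ∃ x, x ∈ Sᗮ ∧ ∀ x', f (x, u) ≤ f (x', u) := by
  by_cases hfin : ∃ x0, f (x0, u) ≠ ⊤
  · obtain ⟨x0, hx0⟩ := hfin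
    obtain ⟨s, hs, x1, hx1, hdecomp⟩ := S.exists_add_mem_mem_orthogonal x0
    have hval : f (x1, u) = f (x0, u) := by
      have h := constancy hlsc hconv hbot hS hs (x1, u)
      have he : (x1, u) + ((s : EuclideanSpace ℝ (Fin n)), (0 : EuclideanSpace ℝ (Fin m))) = (x0, u) := by
        rw [Prod.mk_add_mk, add_zero, hdecomp, add_comm]
      rw [he] at h
      exact h.symm
    obtain ⟨c, hc⟩ : ∃ c : ℝ, f (x1, u) = (c : EReal) :=
      ⟨_, (EReal.coe_toReal (hval ▸ hx0) (hbot _)).symm⟩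
    set A : Set (EuclideanSpace ℝ (Fin n)) :=
      {x | x ∈ Sᗮ ∧ f (x, u) ≤ (c : EReal)} with hA
    have hx1A : x1 ∈ A := ⟨hx1, le_of_eq hc⟩
    have hAconv : Convex ℝ A := by
      rintro p ⟨hp1, hp2⟩ q ⟨hq1, hq2⟩ a b ha hb hab
      refine ⟨Sᗮ.add_mem (Sᗮ.smul_mem a hp1) (Sᗮ.smul_mem b hq1), ?_⟩
      have h := hconv (p, u) (q, u) a b ha hb hab
      have he : a • ((p : EuclideanSpace ℝ (Fin n)), u) + b • (q, u)
          = ((a • p + b • q : EuclideanSpace ℝ (Fin n)), u) := by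
        rw [Prod.smul_mk, Prod.smul_mk, Prod.mk_add_mk, ← add_smul, hab, one_smul]
      rw [he] at h
      refine h.trans ?_
      calc (a : EReal) * f (p, u) + (b : EReal) * f (q, u)
          ≤ (a : EReal) * (c : EReal) + (b : EReal) * (c : EReal) :=
            add_le_add (emul_le_emul_left ha hp2) (emul_le_emul_left hb hq2)
        _ = ((a * c + b * c : ℝ) : EReal) := by
            rw [← EReal.coe_mul, ← EReal.coe_mul, ← EReal.coe_add]
        _ = (c : EReal) := by rw [← add_mul, hab, one_mul]
    have hAclosed : IsClosed A := by
      have h1 : IsClosed {x : EuclideanSpace ℝ (Fin n) | x ∈ Sᗮ} :=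
        Submodule.closed_of_finiteDimensional Sᗮ
      have h2 : IsClosed {x : EuclideanSpace ℝ (Fin n) | f (x, u) ≤ (c : EReal)} :=
        isClosed_le_of_lsc (hlsc.comp (continuous_id.prodMk continuous_const))
          continuous_const
      exact h1.inter h2
    have hrec : ∀ d : EuclideanSpace ℝ (Fin n),
        (∀ t : ℝ, 0 ≤ t → x1 + t • d ∈ A) → d = 0 := by
      intro d hd
      have hdS' : d ∈ Sᗮ := by
        have h1 := (hd 1 zero_le_one).1
        have h2 := Sᗮ.sub_mem h1 hx1
        simpa using h2
      have hrec0 : recessionFn f (d, 0) ≤ 0 := by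
        apply recessionFn_nonpos_of_bound hconv hbot (z := (x1, u)) hc (α := c)
        intro r hr
        have h := (hd r hr.le).2
        have he : ((x1 : EuclideanSpace ℝ (Fin n)), u) + r • (d, (0 : EuclideanSpace ℝ (Fin m)))
            = (x1 + r • d, u) := by
          rw [Prod.smul_mk, smul_zero, Prod.mk_add_mk, add_zero]
        rwa [he]
      have hdS : d ∈ S := (Set.ext_iff.1 hS d).1 hrec0
      have := (Submodule.mem_orthogonal S d).1 hdS' d hdS
      exact inner_self_eq_zero.1 this
    have hcompact := isCompact_of_no_recession hAconv hAclosed hx1A hrec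
    obtain ⟨a, haA, hmin⟩ := exists_min_lsc hcompact ⟨x1, hx1A⟩
      (hlsc.comp (continuous_id.prodMk continuous_const) :
        LowerSemicontinuous fun x => f (x, u))
    refine ⟨a, haA.1, fun x' => ?_⟩
    obtain ⟨s', hs', x'', hx'', hdecomp'⟩ := S.exists_add_mem_mem_orthogonal x'
    have hval' : f (x'', u) = f (x', u) := by
      have h := constancy hlsc hconv hbot hS hs' (x'', u)
      have he : (x'', u) + ((s' : EuclideanSpace ℝ (Fin n)), (0 : EuclideanSpace ℝ (Fin m))) = (x', u) := by
        rw [Prod.mk_add_mk, add_zero, hdecomp', add_comm]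
      rw [he] at h
      exact h.symm
    by_cases hcase : f (x'', u) ≤ (c : EReal)
    · exact (hmin x'' ⟨hx'', hcase⟩).trans (le_of_eq hval')
    · push_neg at hcase
      rw [← hval']
      exact (haA.2.trans hcase.le)
  · push_neg at hfin
    refine ⟨0, Sᗮ.zero_mem, fun x' => ?_⟩
    rw [hfin 0, hfin x']


lemma p_attain (hlsc : LowerSemicontinuous f) (hconv : ConvexEFn f)
    (hbot : ∀ z, f z ≠ ⊥)
    (hS : {x : EuclideanSpace ℝ (Fin n) | recessionFn f (x, 0) ≤ 0} = ↑S)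
    (u : EuclideanSpace ℝ (Fin m)) :
    ∃ x, x ∈ Sᗮ ∧ (⨅ x', f (x', u)) = f (x, u) ∧ ∀ x', f (x, u) ≤ f (x', u) := by
  obtain ⟨x, hxS, hmin⟩ := attain hlsc hconv hbot hS u
  exact ⟨x, hxS, le_antisymm (iInf_le _ x) (le_iInf hmin), hmin⟩

lemma p_ne_bot (hlsc : LowerSemicontinuous f) (hconv : ConvexEFn f)
    (hbot : ∀ z, f z ≠ ⊥)
    (hS : {x : EuclideanSpace ℝ (Fin n) | recessionFn f (x, 0) ≤ 0} = ↑S)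
    (u : EuclideanSpace ℝ (Fin m)) : (⨅ x, f (x, u)) ≠ ⊥ := by
  obtain ⟨x, _, heq, _⟩ := p_attain hlsc hconv hbot hS u
  rw [heq]
  exact hbot _

lemma convexEFn_p (hlsc : LowerSemicontinuous f) (hconv : ConvexEFn f)
    (hbot : ∀ z, f z ≠ ⊥)
    (hS : {x : EuclideanSpace ℝ (Fin n) | recessionFn f (x, 0) ≤ 0} = ↑S) :
    ConvexEFn (fun u : EuclideanSpace ℝ (Fin m) => ⨅ x, f (x, u)) := by
  intro u v a b ha hb hab
  obtain ⟨xu, _, hequ, _⟩ := p_attain hlsc hconv hbot hS u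
  obtain ⟨xv, _, heqv, _⟩ := p_attain hlsc hconv hbot hS v
  simp only
  rw [hequ, heqv]
  refine le_trans (iInf_le _ (a • xu + b • xv)) ?_
  have h := hconv (xu, u) (xv, v) a b ha hb hab
  rwa [Prod.smul_mk, Prod.smul_mk, Prod.mk_add_mk] at h

lemma convex_sublevel {g : EuclideanSpace ℝ (Fin n) × EuclideanSpace ℝ (Fin m) → EReal}
    (hg : ConvexEFn g) (y : ℝ) : Convex ℝ {w | g w ≤ (y : EReal)} := by
  intro w hw w' hw' a b ha hb hab
  simp only [Set.mem_setOf_eq] at *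
  refine (hg w w' a b ha hb hab).trans ?_
  calc (a : EReal) * g w + (b : EReal) * g w'
      ≤ (a : EReal) * (y : EReal) + (b : EReal) * (y : EReal) :=
        add_le_add (emul_le_emul_left ha hw) (emul_le_emul_left hb hw')
    _ = ((a * y + b * y : ℝ) : EReal) := by
        rw [← EReal.coe_mul, ← EReal.coe_mul, ← EReal.coe_add]
    _ = (y : EReal) := by rw [← add_mul, hab, one_mul]

lemma lsc_p (hlsc : LowerSemicontinuous f) (hconv : ConvexEFn f)
    (hbot : ∀ z, f z ≠ ⊥)
    (hS : {x : EuclideanSpace ℝ (Fin n) | recessionFn f (x, 0) ≤ 0} = ↑S) :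
    LowerSemicontinuous (fun u : EuclideanSpace ℝ (Fin m) => ⨅ x, f (x, u)) := by
  rw [lowerSemicontinuous_iff_isClosed_preimage]
  intro y
  induction y using EReal.rec with
  | top =>
    convert isClosed_univ
    ext u
    simp
  | bot =>
    convert isClosed_empty
    ext u
    simp only [Set.mem_preimage, Set.mem_Iic, le_bot_iff, Set.mem_empty_iff_false, iff_false]
    exact p_ne_bot hlsc hconv hbot hS u
  | coe y =>
    refine IsSeqClosed.isClosed ?_
    intro useq u huseq hulim
    simp only [Set.mem_preimage, Set.mem_Iic] at huseq ⊢
    have hmins := fun k => p_attain hlsc hconv hbot hS (useq k)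
    choose xs hxsS hxseq _ using hmins
    have hfx : ∀ k, f (xs k, useq k) ≤ (y : EReal) := fun k => (hxseq k) ▸ huseq k
    -- the auxiliary compact convex set
    set C : Set (EuclideanSpace ℝ (Fin n) × EuclideanSpace ℝ (Fin m)) :=
      {w | w.1 ∈ Sᗮ ∧ f w ≤ (y : EReal) ∧ ‖w.2 - u‖ ≤ 1} with hC
    have hCclosed : IsClosed C := by
      have h1 : IsClosed {w : EuclideanSpace ℝ (Fin n) × EuclideanSpace ℝ (Fin m) | w.1 ∈ Sᗮ} :=
        (Submodule.closed_of_finiteDimensional Sᗮ).preimage continuous_fst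
      have h2 : IsClosed {w : EuclideanSpace ℝ (Fin n) × EuclideanSpace ℝ (Fin m) | f w ≤ (y : EReal)} :=
        isClosed_le_of_lsc hlsc continuous_const
      have h3 : IsClosed {w : EuclideanSpace ℝ (Fin n) × EuclideanSpace ℝ (Fin m) | ‖w.2 - u‖ ≤ 1} :=
        isClosed_le ((continuous_snd.sub continuous_const).norm) continuous_const
      exact h1.inter (h2.inter h3)
    have hCconv : Convex ℝ C := by
      rintro w ⟨hw1, hw2, hw3⟩ w' ⟨hw1', hw2', hw3'⟩ a b ha hb hab
      refine ⟨?_, ?_, ?_⟩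
      · exact Sᗮ.add_mem (Sᗮ.smul_mem a hw1) (Sᗮ.smul_mem b hw1')
      · exact convex_sublevel hconv y hw2 hw2' ha hb hab
      · have hu : (a • u + b • u : EuclideanSpace ℝ (Fin m)) = u := by
          rw [← add_smul, hab, one_smul]
        have he : (a • w + b • w').2 - u = a • (w.2 - u) + b • (w'.2 - u) := by
          have h2 : (a • w + b • w').2 = a • w.2 + b • w'.2 := rfl
          calc (a • w + b • w').2 - u
              = a • w.2 + b • w'.2 - (a • u + b • u) := by rw [h2, hu]
            _ = a • (w.2 - u) + b • (w'.2 - u) := by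
              rw [smul_sub, smul_sub]; abel
        rw [he]
        calc ‖a • (w.2 - u) + b • (w'.2 - u)‖ ≤ ‖a • (w.2 - u)‖ + ‖b • (w'.2 - u)‖ :=
              norm_add_le _ _
          _ = a * ‖w.2 - u‖ + b * ‖w'.2 - u‖ := by
              rw [norm_smul, norm_smul, Real.norm_eq_abs, Real.norm_eq_abs,
                abs_of_nonneg ha, abs_of_nonneg hb]
          _ ≤ a * 1 + b * 1 := by
              exact add_le_add (mul_le_mul_of_nonneg_left hw3 ha)
                (mul_le_mul_of_nonneg_left hw3' hb)
          _ = 1 := by linarith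
    -- eventually the minimizing pairs are in C
    have hball : ∀ᶠ k in Filter.atTop, useq k ∈ Metric.closedBall u 1 :=
      hulim (Metric.closedBall_mem_nhds u one_pos)
    obtain ⟨K, hK⟩ := Filter.eventually_atTop.1 hball
    set wseq : ℕ → EuclideanSpace ℝ (Fin n) × EuclideanSpace ℝ (Fin m) :=
      fun k => (xs (K + k), useq (K + k)) with hwseq
    have hwmem : ∀ k, wseq k ∈ C := by
      intro k
      refine ⟨hxsS _, hfx _, ?_⟩
      have := hK (K + k) (Nat.le_add_right K k)
      rwa [Metric.mem_closedBall, dist_eq_norm] at this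
    have hbase : wseq 0 ∈ C := hwmem 0
    have hrec : ∀ d : EuclideanSpace ℝ (Fin n) × EuclideanSpace ℝ (Fin m),
        (∀ t : ℝ, 0 ≤ t → wseq 0 + t • d ∈ C) → d = 0 := by
      intro d hd
      have he2 : d.2 = 0 := by
        by_contra he
        have hn : (0:ℝ) < ‖d.2‖ := norm_pos_iff.2 he
        set t : ℝ := (2 + ‖(wseq 0).2 - u‖) / ‖d.2‖ with htdef
        have ht : 0 ≤ t := by positivity
        have h1 := (hd t ht).2.2
        have h2 : (wseq 0 + t • d).2 = (wseq 0).2 + t • d.2 := rfl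
        rw [h2] at h1
        have h3 : ‖t • d.2‖ ≤ ‖(wseq 0).2 + t • d.2 - u‖ + ‖(wseq 0).2 - u‖ := by
          have heq : t • d.2 = ((wseq 0).2 + t • d.2 - u) - ((wseq 0).2 - u) := by abel
          calc ‖t • d.2‖ = ‖((wseq 0).2 + t • d.2 - u) - ((wseq 0).2 - u)‖ := by rw [← heq]
            _ ≤ _ := norm_sub_le _ _
        have h4 : ‖t • d.2‖ = 2 + ‖(wseq 0).2 - u‖ := by
          rw [norm_smul, Real.norm_eq_abs, abs_of_nonneg ht, htdef,
            div_mul_cancel₀ _ hn.ne']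
        linarith
      have hd1S' : d.1 ∈ Sᗮ := by
        have h1 := (hd 1 zero_le_one).1
        have h2 : (wseq 0 + (1:ℝ) • d).1 = (wseq 0).1 + d.1 := by
          simp [Prod.fst_add]
        rw [h2] at h1
        have := Sᗮ.sub_mem h1 (hwmem 0).1
        simpa using this
      have hde : d = ((d.1 : EuclideanSpace ℝ (Fin n)), (0 : EuclideanSpace ℝ (Fin m))) :=
        Prod.ext rfl he2
      obtain ⟨cb, hcb⟩ : ∃ cb : ℝ, f (wseq 0) = (cb : EReal) :=
        ⟨_, (EReal.coe_toReal (fun h => by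
          have hb2 := (hwmem 0).2.1
          rw [h] at hb2
          exact (EReal.coe_ne_top y) (top_le_iff.1 hb2)) (hbot _)).symm⟩
      have hrec0 : recessionFn f (d.1, 0) ≤ 0 := by
        apply recessionFn_nonpos_of_bound hconv hbot (z := wseq 0) hcb (α := y)
        intro r hr
        have := (hd r hr.le).2.1
        rwa [← hde]
      have hd1 : d.1 ∈ S := (Set.ext_iff.1 hS d.1).1 hrec0
      have h0 : d.1 = 0 :=
        inner_self_eq_zero.1 ((Submodule.mem_orthogonal S d.1).1 hd1S' d.1 hd1)
      rw [hde, h0]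
      rfl
    have hcompact := isCompact_of_no_recession hCconv hCclosed hbase hrec
    obtain ⟨w, hwC, φ, hφ, hwlim⟩ := hcompact.tendsto_subseq hwmem
    have hKφ : Filter.Tendsto (fun k => K + φ k) Filter.atTop Filter.atTop :=
      Filter.tendsto_atTop_mono (fun k => Nat.le_add_left (φ k) K) hφ.tendsto_atTop
    have hsnd : Filter.Tendsto (fun k => (wseq (φ k)).2) Filter.atTop (𝓝 w.2) :=
      (continuous_snd.tendsto w).comp hwlim
    have hsnd' : Filter.Tendsto (fun k => (wseq (φ k)).2) Filter.atTop (𝓝 u) := hulim.comp hKφ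
    have hw2 : w.2 = u := tendsto_nhds_unique hsnd hsnd'
    have hfw : f w ≤ (y : EReal) :=
      lsc_le_of_tendsto hlsc hwlim (fun k => hfx (K + φ k))
    have : (w.1, u) = w := by rw [← hw2]
    calc (⨅ x, f (x, u)) ≤ f (w.1, u) := iInf_le _ w.1
      _ = f w := by rw [this]
      _ ≤ (y : EReal) := hfw

lemma part4 (hlsc : LowerSemicontinuous f) (hconv : ConvexEFn f)
    (hbot : ∀ z, f z ≠ ⊥)
    (hS : {x : EuclideanSpace ℝ (Fin n) | recessionFn f (x, 0) ≤ 0} = ↑S)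
    (hp1 : ∃ u : EuclideanSpace ℝ (Fin m), (⨅ x, f (x, u)) < ⊤)
    (u : EuclideanSpace ℝ (Fin m)) :
    recessionFn (fun u' => ⨅ x, f (x, u')) u = ⨅ x, recessionFn f (x, u) := by
  set p : EuclideanSpace ℝ (Fin m) → EReal := fun u' => ⨅ x, f (x, u') with hp
  have hpbot : ∀ u', p u' ≠ ⊥ := fun u' => p_ne_bot hlsc hconv hbot hS u'
  have hplsc : LowerSemicontinuous p := lsc_p hlsc hconv hbot hS
  have hpconv : ConvexEFn p := convexEFn_p hlsc hconv hbot hS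
  obtain ⟨u₀, hu₀⟩ := hp1
  obtain ⟨x₀, hx₀S, hx₀eq, hx₀min⟩ := p_attain hlsc hconv hbot hS u₀
  obtain ⟨c₀, hc₀⟩ : ∃ c₀ : ℝ, p u₀ = (c₀ : EReal) :=
    ⟨_, (EReal.coe_toReal hu₀.ne (hpbot u₀)).symm⟩
  have hz₀ : f (x₀, u₀) = (c₀ : EReal) := by rw [← hx₀eq]; exact hc₀
  have hle : recessionFn p u ≤ ⨅ x, recessionFn f (x, u) := by
    refine le_iInf fun x => ?_
    by_cases htop : recessionFn f (x, u) = ⊤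
    · rw [htop]; exact le_top
    have hfb : recessionFn f (x, u) ≠ ⊥ := by
      rw [recessionFn_eq_S hlsc hconv hbot hz₀ (x, u)]
      exact (bot_lt_S hbot hz₀ (x, u)).ne'
    obtain ⟨ν, hν⟩ : ∃ ν : ℝ, recessionFn f (x, u) = (ν : EReal) :=
      ⟨_, (EReal.coe_toReal htop hfb).symm⟩
    rw [hν]
    apply recessionFn_le_of_bound hpbot hc₀
    intro r hr
    have hSν : slopeSup f (x₀, u₀) (x, u) ≤ (ν : EReal) := by
      rw [← recessionFn_eq_S hlsc hconv hbot hz₀]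
      exact hν.le
    have h1 := (S_le_iff hbot hz₀).1 hSν r hr
    have he : ((x₀ : EuclideanSpace ℝ (Fin n)), u₀) + r • (x, u) = (x₀ + r • x, u₀ + r • u) := by
      rw [Prod.smul_mk, Prod.mk_add_mk]
    rw [he] at h1
    exact (iInf_le _ (x₀ + r • x)).trans h1
  have hge : (⨅ x, recessionFn f (x, u)) ≤ recessionFn p u := by
    by_cases htop : recessionFn p u = ⊤
    · rw [htop]; exact le_top
    have hpb : recessionFn p u ≠ ⊥ := by
      rw [recessionFn_eq_S hplsc hpconv hpbot hc₀ u]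
      exact (bot_lt_S hpbot hc₀ u).ne'
    obtain ⟨μ, hμ⟩ : ∃ μ : ℝ, recessionFn p u = (μ : EReal) :=
      ⟨_, (EReal.coe_toReal htop hpb).symm⟩
    rw [hμ]
    have hb : ∀ r : ℝ, 0 < r → p (u₀ + r • u) ≤ ((c₀ + r * μ : ℝ) : EReal) := by
      have hSμ : slopeSup p u₀ u ≤ (μ : EReal) := by
        rw [← recessionFn_eq_S hplsc hpconv hpbot hc₀]
        exact hμ.le
      exact (S_le_iff hpbot hc₀).1 hSμ
    set C : Set (EuclideanSpace ℝ (Fin n) × ℝ) :=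
      {w | w.1 ∈ Sᗮ ∧ 0 ≤ w.2 ∧ f (w.1, u₀ + w.2 • u) ≤ ((c₀ + w.2 * μ : ℝ) : EReal)}
      with hCdef
    have hbase : ((x₀ : EuclideanSpace ℝ (Fin n)), (0 : ℝ)) ∈ C := by
      refine ⟨hx₀S, le_refl 0, ?_⟩
      show f (x₀, u₀ + (0:ℝ) • u) ≤ ((c₀ + (0:ℝ) * μ : ℝ) : EReal)
      rw [zero_smul, add_zero, zero_mul, add_zero]
      exact le_of_eq hz₀
    have hCclosed : IsClosed C := by
      have h1 : IsClosed {w : EuclideanSpace ℝ (Fin n) × ℝ | w.1 ∈ Sᗮ} :=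
        (Submodule.closed_of_finiteDimensional Sᗮ).preimage continuous_fst
      have h2 : IsClosed {w : EuclideanSpace ℝ (Fin n) × ℝ | 0 ≤ w.2} :=
        isClosed_le continuous_const continuous_snd
      have h3 : IsClosed {w : EuclideanSpace ℝ (Fin n) × ℝ |
          f (w.1, u₀ + w.2 • u) ≤ ((c₀ + w.2 * μ : ℝ) : EReal)} := by
        apply isClosed_le_of_lsc
        · exact hlsc.comp
            (continuous_fst.prodMk (continuous_const.add (continuous_snd.smul continuous_const)))
        · exact continuous_coe_real_ereal.comp
            (continuous_const.add (continuous_snd.mul continuous_const))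
      exact h1.inter (h2.inter h3)
    have hCconv : Convex ℝ C := by
      rintro ⟨x1, r1⟩ ⟨h11, h12, h13⟩ ⟨x2, r2⟩ ⟨h21, h22, h23⟩ a b ha hb hab
      have hkey : a • ((x1 : EuclideanSpace ℝ (Fin n)), r1) + b • ((x2 : EuclideanSpace ℝ (Fin n)), r2)
          = ((a • x1 + b • x2 : EuclideanSpace ℝ (Fin n)), a * r1 + b * r2) := by
        rw [Prod.smul_mk, Prod.smul_mk, Prod.mk_add_mk, smul_eq_mul, smul_eq_mul]
      rw [hkey]
      refine ⟨Sᗮ.add_mem (Sᗮ.smul_mem a h11) (Sᗮ.smul_mem b h21),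
        add_nonneg (mul_nonneg ha h12) (mul_nonneg hb h22), ?_⟩
      have hu₀ab : a • u₀ + b • u₀ = u₀ := by rw [← add_smul, hab, one_smul]
      have haffine : a • ((x1 : EuclideanSpace ℝ (Fin n)), u₀ + r1 • u)
          + b • ((x2 : EuclideanSpace ℝ (Fin n)), u₀ + r2 • u)
          = ((a • x1 + b • x2 : EuclideanSpace ℝ (Fin n)), u₀ + (a * r1 + b * r2) • u) := by
        rw [Prod.smul_mk, Prod.smul_mk, Prod.mk_add_mk]
        congr 1
        rw [smul_add, smul_add, smul_smul, smul_smul, add_smul]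
        calc a • u₀ + (a * r1) • u + (b • u₀ + (b * r2) • u)
            = (a • u₀ + b • u₀) + ((a * r1) • u + (b * r2) • u) := by abel
          _ = u₀ + ((a * r1) • u + (b * r2) • u) := by rw [hu₀ab]
      have h := hconv (x1, u₀ + r1 • u) (x2, u₀ + r2 • u) a b ha hb hab
      rw [haffine] at h
      refine h.trans ?_
      calc (a : EReal) * f (x1, u₀ + r1 • u) + (b : EReal) * f (x2, u₀ + r2 • u)
          ≤ (a : EReal) * ((c₀ + r1 * μ : ℝ) : EReal) + (b : EReal) * ((c₀ + r2 * μ : ℝ) : EReal) :=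
            add_le_add (emul_le_emul_left ha h13) (emul_le_emul_left hb h23)
        _ = ((a * (c₀ + r1 * μ) + b * (c₀ + r2 * μ) : ℝ) : EReal) := by
            rw [← EReal.coe_mul, ← EReal.coe_mul, ← EReal.coe_add]
        _ = ((c₀ + (a * r1 + b * r2) * μ : ℝ) : EReal) := by
            congr 1
            have hb' : b = 1 - a := by linarith
            rw [hb']; ring
    have hunb : ¬ Bornology.IsBounded C := by
      intro hbd
      obtain ⟨R, hR⟩ := (Metric.isBounded_iff_subset_closedBall 0).1 hbd
      set r : ℝ := max 1 (R + 1) with hrdef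
      have hr0 : (0 : ℝ) < r := lt_of_lt_of_le one_pos (le_max_left _ _)
      obtain ⟨xr, hxrS, hxreq, _⟩ := p_attain hlsc hconv hbot hS (u₀ + r • u)
      have hmemC : ((xr : EuclideanSpace ℝ (Fin n)), r) ∈ C := by
        refine ⟨hxrS, hr0.le, ?_⟩
        show f (xr, u₀ + r • u) ≤ ((c₀ + r * μ : ℝ) : EReal)
        rw [← hxreq]
        exact hb r hr0
      have h1 := hR hmemC
      rw [Metric.mem_closedBall, dist_zero_right] at h1
      have h2 : r ≤ ‖((xr : EuclideanSpace ℝ (Fin n)), r)‖ := by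
        rw [Prod.norm_def]
        exact le_trans (le_abs_self r) (by rw [Real.norm_eq_abs]; exact le_max_right _ _)
      have h3 : R + 1 ≤ r := le_max_right _ _
      linarith
    obtain ⟨d, hd0, hd⟩ := exists_recession_dir hCconv hCclosed hbase hunb
    have hds : 0 ≤ d.2 := by
      have h1 := (hd 1 zero_le_one).2.1
      have h2 : (((x₀ : EuclideanSpace ℝ (Fin n)), (0 : ℝ)) + (1:ℝ) • d).2 = d.2 := by
        simp
      rwa [h2] at h1
    rcases hds.eq_or_lt with hds0 | hds0
    · -- d.2 = 0 : contradiction with d ≠ 0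
      exfalso
      have hd2 : d.2 = 0 := hds0.symm
      have hd1S' : d.1 ∈ Sᗮ := by
        have h1 := (hd 1 zero_le_one).1
        have h2 : (((x₀ : EuclideanSpace ℝ (Fin n)), (0 : ℝ)) + (1:ℝ) • d).1 = x₀ + d.1 := by
          simp
        rw [h2] at h1
        have := Sᗮ.sub_mem h1 hx₀S
        simpa using this
      have hrec0 : recessionFn f (d.1, 0) ≤ 0 := by
        apply recessionFn_nonpos_of_bound hconv hbot (z := ((x₀ : EuclideanSpace ℝ (Fin n)), u₀))
          hz₀ (α := c₀)
        intro r hr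
        have h1 := (hd r hr.le).2.2
        have h2 : (((x₀ : EuclideanSpace ℝ (Fin n)), (0 : ℝ)) + r • d).1 = x₀ + r • d.1 := rfl
        have h3 : (((x₀ : EuclideanSpace ℝ (Fin n)), (0 : ℝ)) + r • d).2 = r * d.2 := by
          show (0 : ℝ) + r * d.2 = r * d.2
          rw [zero_add]
        rw [h2, h3, hd2, mul_zero, zero_smul, add_zero, zero_mul, add_zero] at h1
        have he : ((x₀ : EuclideanSpace ℝ (Fin n)), u₀) + r • ((d.1 : EuclideanSpace ℝ (Fin n)), (0 : EuclideanSpace ℝ (Fin m)))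
            = (x₀ + r • d.1, u₀) := by
          rw [Prod.smul_mk, smul_zero, Prod.mk_add_mk, add_zero]
        rw [he]
        exact h1
      have hd1 : d.1 ∈ S := (Set.ext_iff.1 hS d.1).1 hrec0
      have h0 : d.1 = 0 :=
        inner_self_eq_zero.1 ((Submodule.mem_orthogonal S d.1).1 hd1S' d.1 hd1)
      exact hd0 (Prod.ext h0 hd2)
    · -- d.2 > 0
      set x : EuclideanSpace ℝ (Fin n) := d.2⁻¹ • d.1 with hxdef
      have hxbound : recessionFn f (x, u) ≤ (μ : EReal) := by
        apply recessionFn_le_of_bound hbot hz₀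
        intro r hr
        have ht0 : 0 ≤ r / d.2 := by positivity
        have h1 := (hd (r / d.2) ht0).2.2
        have h2 : (((x₀ : EuclideanSpace ℝ (Fin n)), (0 : ℝ)) + (r / d.2) • d).1
            = x₀ + (r / d.2) • d.1 := rfl
        have h3 : (((x₀ : EuclideanSpace ℝ (Fin n)), (0 : ℝ)) + (r / d.2) • d).2 = r := by
          show (0 : ℝ) + (r / d.2) * d.2 = r
          rw [zero_add, div_mul_cancel₀ _ hds0.ne']
        rw [h2, h3] at h1
        have h4 : (r / d.2) • d.1 = r • x := by
          rw [hxdef, smul_smul, div_eq_mul_inv]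
        rw [h4] at h1
        have he : ((x₀ : EuclideanSpace ℝ (Fin n)), u₀) + r • ((x : EuclideanSpace ℝ (Fin n)), u)
            = (x₀ + r • x, u₀ + r • u) := by
          rw [Prod.smul_mk, Prod.mk_add_mk]
        rw [he]
        exact h1
      exact (iInf_le _ x).trans hxbound
  exact le_antisymm hle hge

end Main


/-- Lemma 6.1: if `f` is a proper lsc convex function on `ℝⁿ × ℝᵐ`
and `N = {x : f^∞(x,0) ≤ 0}` is a linear subspace, then the inf-projection
`p(u) = inf_x f(x,u)` is convex and lower semicontinuous, the infimum is attained at a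
point of `N^⊥`, and if `p` is proper then `p^∞(u) = inf_x f^∞(x,u)`. -/
theorem statement19 (n m : ℕ)
    (f : EuclideanSpace ℝ (Fin n) × EuclideanSpace ℝ (Fin m) → EReal)
    (hlsc : LowerSemicontinuous f) (hconv : ConvexEFn f)
    (hproper₁ : ∃ z, f z < ⊤) (hproper₂ : ∀ z, f z ≠ ⊥)
    (hN : ∃ S : Submodule ℝ (EuclideanSpace ℝ (Fin n)),
      {x : EuclideanSpace ℝ (Fin n) | recessionFn f (x, 0) ≤ 0} = ↑S) :
    LowerSemicontinuous (fun u : EuclideanSpace ℝ (Fin m) => ⨅ x, f (x, u)) ∧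
    Convex ℝ {q : EuclideanSpace ℝ (Fin m) × ℝ |
      (⨅ x, f (x, q.1)) ≤ (q.2 : EReal)} ∧
    (∀ u : EuclideanSpace ℝ (Fin m), ∃ x : EuclideanSpace ℝ (Fin n),
      (∀ x', f (x, u) ≤ f (x', u)) ∧
      ∀ y : EuclideanSpace ℝ (Fin n), recessionFn f (y, 0) ≤ 0 → ⟪x, y⟫ = 0) ∧
    ((∃ u : EuclideanSpace ℝ (Fin m), (⨅ x, f (x, u)) < ⊤) →
      (∀ u : EuclideanSpace ℝ (Fin m), (⨅ x, f (x, u)) ≠ ⊥) →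
      ∀ u : EuclideanSpace ℝ (Fin m),
        recessionFn (fun u' => ⨅ x, f (x, u')) u = ⨅ x, recessionFn f (x, u)) := by
  obtain ⟨S, hS⟩ := hN
  refine ⟨lsc_p hlsc hconv hproper₂ hS, convex_epi (convexEFn_p hlsc hconv hproper₂ hS),
    fun u => ?_, fun hp1 _ u => part4 hlsc hconv hproper₂ hS hp1 u⟩
  obtain ⟨x, hxS, hmin⟩ := attain hlsc hconv hproper₂ hS u
  refine ⟨x, hmin, fun y hy => ?_⟩
  have hyS : y ∈ S := (Set.ext_iff.1 hS y).1 hy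
  rw [real_inner_comm]
  exact (Submodule.mem_orthogonal S x).1 hxS y hyS


end PaperDP
end
end
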